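/- arXiv:2407.07908 — 7 statements merged into one kernel-verified Lean document; each statement's English description precedes it below -/
import Mathlib

section
/- For any finite set T ⊆ [d] and any integer 0 ≤ x ≤ |T|, the uniform superposition over all orderings of T (the type state |T⟩) decomposes as |T⟩ = (1/√(C(|T|,x))) · Σ_{X ∈ C(T,x)} |X⟩ ⊗ |T\X⟩, where the sum is over all x-element subsets X of T, the first register holds the type state of X and the second the type state of T\X. Equivalently: the vectors |X⟩⊗|T\X⟩ for distinct x-subsets X are pairwise orthogonal unit vectors, and each has inner product 1/√(C(|T|,x)) with |T⟩. -/
/-- The type state `|T⟩` of a finite set `T` (a collision-free type), as a real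
vector indexed by tuples `ι → α`: the uniform superposition
`(1/√(|ι|!))·Σ_v |v⟩` over all tuples `v` enumerating `T` without repetition. -/
noncomputable def typeState {α : Type*} [DecidableEq α] {ι : Type*} [Fintype ι] [DecidableEq ι]
    (T : Finset α) : (ι → α) → ℝ := fun v =>
  if Function.Injective v ∧ Finset.image v Finset.univ = T then
    (Real.sqrt (Nat.factorial (Fintype.card ι)))⁻¹ else 0

lemma aux_glue {α : Type*} [DecidableEq α] {m n : ℕ} (v : Fin m ⊕ Fin n → α)
    (X T : Finset α) (hXT : X ⊆ T)
    (hinl : Function.Injective (v ∘ Sum.inl)) (hinr : Function.Injective (v ∘ Sum.inr))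
    (himl : Finset.image (v ∘ Sum.inl) Finset.univ = X)
    (himr : Finset.image (v ∘ Sum.inr) Finset.univ = T \ X) :
    Function.Injective v ∧ Finset.image v Finset.univ = T := by
  constructor
  · intro a b hab
    match a, b with
    | Sum.inl a, Sum.inl b => exact congrArg Sum.inl (hinl hab)
    | Sum.inr a, Sum.inr b => exact congrArg Sum.inr (hinr hab)
    | Sum.inl a, Sum.inr b =>
      exfalso
      have h1 : v (Sum.inl a) ∈ X := himl ▸ Finset.mem_image_of_mem _ (Finset.mem_univ a)
      have h2 : v (Sum.inr b) ∈ T \ X := himr ▸ Finset.mem_image_of_mem _ (Finset.mem_univ b)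
      rw [hab] at h1
      exact (Finset.mem_sdiff.mp h2).2 h1
    | Sum.inr a, Sum.inl b =>
      exfalso
      have h1 : v (Sum.inl b) ∈ X := himl ▸ Finset.mem_image_of_mem _ (Finset.mem_univ b)
      have h2 : v (Sum.inr a) ∈ T \ X := himr ▸ Finset.mem_image_of_mem _ (Finset.mem_univ a)
      rw [← hab] at h1
      exact (Finset.mem_sdiff.mp h2).2 h1
  · have : Finset.image v Finset.univ
        = Finset.image (v ∘ Sum.inl) Finset.univ ∪ Finset.image (v ∘ Sum.inr) Finset.univ := by
      ext a
      simp [Finset.mem_image, Sum.exists, Function.comp]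
    rw [this, himl, himr, Finset.union_sdiff_of_subset hXT]

/-- for a set `T ⊆ [d]` and `0 ≤ x ≤ |T|`, the type state decomposes
as `|T⟩ = (1/√C(|T|,x)) Σ_{X ∈ C(T,x)} |X⟩ ⊗ |T\X⟩` (stated coordinatewise, with
the first register indexed by `Fin x` and the second by `Fin (|T|-x)`). -/
theorem stmt0 (d : ℕ) (T : Finset (Fin d)) (x : ℕ) (hx : x ≤ T.card)
    (v : Fin x ⊕ Fin (T.card - x) → Fin d) :
    typeState (ι := Fin x ⊕ Fin (T.card - x)) T v
      = (Real.sqrt (T.card.choose x))⁻¹ *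
          ∑ X ∈ T.powersetCard x,
            typeState (ι := Fin x) X (v ∘ Sum.inl) *
              typeState (ι := Fin (T.card - x)) (T \ X) (v ∘ Sum.inr) := by
  classical
  have hcard : Fintype.card (Fin x ⊕ Fin (T.card - x)) = T.card := by
    simp [Nat.add_sub_cancel' hx]
  by_cases hv : Function.Injective v ∧ Finset.image v Finset.univ = T
  · obtain ⟨hinj, himg⟩ := hv
    have hinl : Function.Injective (v ∘ Sum.inl) := hinj.comp Sum.inl_injective
    have hinr : Function.Injective (v ∘ Sum.inr) := hinj.comp Sum.inr_injective
    obtain ⟨X, hXdef⟩ : ∃ X, X = Finset.image (v ∘ Sum.inl) Finset.univ := ⟨_, rfl⟩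
    have hXsub : X ⊆ T := by
      intro a ha
      rw [hXdef] at ha
      obtain ⟨i, -, rfl⟩ := Finset.mem_image.mp ha
      have h : v (Sum.inl i) ∈ Finset.image v Finset.univ :=
        Finset.mem_image_of_mem v (Finset.mem_univ (Sum.inl i))
      rwa [himg] at h
    have hXcard : X.card = x := by
      rw [hXdef, Finset.card_image_of_injective _ hinl, Finset.card_univ, Fintype.card_fin]
    have himr : Finset.image (v ∘ Sum.inr) Finset.univ = T \ X := by
      have hdisj : Disjoint X (Finset.image (v ∘ Sum.inr) Finset.univ) := by
        rw [Finset.disjoint_left]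
        intro a ha hb
        rw [hXdef] at ha
        obtain ⟨i, -, hi⟩ := Finset.mem_image.mp ha
        obtain ⟨j, -, hj⟩ := Finset.mem_image.mp hb
        have := hinj (show v (Sum.inl i) = v (Sum.inr j) from hi.trans hj.symm)
        simp at this
      have hun : X ∪ Finset.image (v ∘ Sum.inr) Finset.univ = T := by
        ext a
        conv_rhs => rw [← himg]
        rw [hXdef]
        simp [Finset.mem_image, Sum.exists, Function.comp]
      conv_rhs => rw [← hun]
      exact (Finset.union_sdiff_cancel_left hdisj).symm
    have hLHS : typeState (ι := Fin x ⊕ Fin (T.card - x)) T v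
        = (Real.sqrt (Nat.factorial T.card))⁻¹ := by
      rw [typeState, if_pos ⟨hinj, himg⟩, hcard]
    rw [hLHS, Finset.sum_eq_single X]
    · have h1 : typeState (ι := Fin x) X (v ∘ Sum.inl) = (Real.sqrt (Nat.factorial x))⁻¹ := by
        rw [typeState, if_pos ⟨hinl, hXdef.symm⟩, Fintype.card_fin]
      have h2 : typeState (ι := Fin (T.card - x)) (T \ X) (v ∘ Sum.inr)
          = (Real.sqrt (Nat.factorial (T.card - x)))⁻¹ := by
        rw [typeState, if_pos ⟨hinr, himr⟩, Fintype.card_fin]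
      rw [h1, h2]
      have key : (T.card.choose x : ℝ) * (Nat.factorial x) * (Nat.factorial (T.card - x))
          = Nat.factorial T.card := by
        exact_mod_cast congrArg (Nat.cast (R := ℝ)) (Nat.choose_mul_factorial_mul_factorial hx)
      rw [show (Nat.factorial T.card : ℝ)
            = (T.card.choose x : ℝ) * (Nat.factorial x) * (Nat.factorial (T.card - x)) from key.symm]
      rw [Real.sqrt_mul (by positivity), Real.sqrt_mul (by positivity)]
      rw [mul_inv, mul_inv]
      ring
    · intro X' hX' hne
      have : typeState (ι := Fin x) X' (v ∘ Sum.inl) = 0 := by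
        rw [typeState, if_neg]
        rintro ⟨-, him⟩
        exact hne (by rw [← him, hXdef])
      rw [this, zero_mul]
    · intro h
      exfalso
      exact h (Finset.mem_powersetCard.mpr ⟨hXsub, hXcard⟩)
  · have hLHS : typeState (ι := Fin x ⊕ Fin (T.card - x)) T v = 0 := by
      rw [typeState, if_neg hv]
    rw [hLHS, Finset.sum_eq_zero, mul_zero]
    intro X hX
    obtain ⟨hXT, hXcard⟩ := Finset.mem_powersetCard.mp hX
    by_contra h
    have h1 : typeState (ι := Fin x) X (v ∘ Sum.inl) ≠ 0 := left_ne_zero_of_mul h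
    have h2 : typeState (ι := Fin (T.card - x)) (T \ X) (v ∘ Sum.inr) ≠ 0 :=
      right_ne_zero_of_mul h
    rw [typeState] at h1 h2
    have c1 : Function.Injective (v ∘ Sum.inl) ∧ Finset.image (v ∘ Sum.inl) Finset.univ = X := by
      by_contra hc; rw [if_neg hc] at h1; exact h1 rfl
    have c2 : Function.Injective (v ∘ Sum.inr) ∧ Finset.image (v ∘ Sum.inr) Finset.univ = T \ X := by
      by_contra hc; rw [if_neg hc] at h2; exact h2 rfl
    exact hv (aux_glue v X T hXT c1.1 c2.1 c1.2 c2.2)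
end

section
/- Let d, t, s be natural numbers with d ≥ 2t and 0 ≤ s ≤ t. Fix disjoint sets C, I ⊆ [d] with |C| = |I| = s. Consider the matrix K = Σ_{X',Y'} |C ⊎ Y'⟩⟨C ⊎ X'| ⊗ |I ⊎ Y'⟩⟨I ⊎ X'|, where the sum is over ordered pairs of disjoint (t−s)-element subsets X', Y' of [d] \ (C ⊎ I). Then K is isospectral to the adjacency matrix of the Kneser graph K(d−2s, t−s): its multiset of nonzero eigenvalues (with multiplicity) equals that of the Kneser graph adjacency matrix. -/
open Polynomial Matrix


lemma charpoly_zero_aux (m : Type*) [Fintype m] [DecidableEq m] :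
    (0 : Matrix m m ℝ).charpoly = X ^ Fintype.card m := by
  rw [Matrix.charpoly]
  have : charmatrix (0 : Matrix m m ℝ) = Matrix.diagonal (fun _ => X) := by
    ext i j
    by_cases h : i = j <;> simp [charmatrix_apply, Matrix.diagonal, Matrix.one_apply, h]
  rw [this, Matrix.det_diagonal, Finset.prod_const, Finset.card_univ]

lemma charpoly_embed {n n' : Type*} [Fintype n] [DecidableEq n] [Fintype n'] [DecidableEq n']
    (f : n' → n) (hf : Function.Injective f)
    (A : Matrix n' n' ℝ) (M : Matrix n n ℝ)
    (h1 : ∀ i j, M (f i) (f j) = A i j)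
    (h2 : ∀ p q : n, (p ∉ Set.range f ∨ q ∉ Set.range f) → M p q = 0) :
    M.charpoly * X ^ Fintype.card n' = A.charpoly * X ^ Fintype.card n := by
  classical
  let e : n' ⊕ ((Set.range f)ᶜ : Set n) ≃ n :=
    (Equiv.sumCongr (Equiv.ofInjective f hf) (Equiv.refl _)).trans
      (Equiv.Set.sumCompl (Set.range f))
  have he : Matrix.reindex e.symm e.symm M =
      Matrix.fromBlocks A 0 (0 : Matrix _ n' ℝ) (0 : Matrix ((Set.range f)ᶜ : Set n) _ ℝ) := by
    ext i j
    have hei : ∀ i, M (e i) (e j) = M (e i) (e j) := fun _ => rfl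
    rcases i with i | i <;> rcases j with j | j <;>
      simp only [Matrix.reindex_apply, Matrix.submatrix_apply, Equiv.symm_symm,
        Matrix.fromBlocks_apply₁₁, Matrix.fromBlocks_apply₁₂, Matrix.fromBlocks_apply₂₁,
        Matrix.fromBlocks_apply₂₂, Matrix.zero_apply, e, Equiv.trans_apply,
        Equiv.sumCongr_apply, Sum.map_inl, Sum.map_inr, Equiv.coe_refl, id_eq,
        Equiv.Set.sumCompl_apply_inl, Equiv.Set.sumCompl_apply_inr, Equiv.ofInjective_apply]
    · exact h1 i j
    · exact h2 _ _ (Or.inr j.2)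
    · exact h2 _ _ (Or.inl i.2)
    · exact h2 _ _ (Or.inl i.2)
  have hchar : M.charpoly = A.charpoly * X ^ Fintype.card ((Set.range f)ᶜ : Set n) := by
    rw [← Matrix.charpoly_reindex e.symm M, he, Matrix.charpoly_fromBlocks_zero₁₂,
      charpoly_zero_aux]
  have hcard : Fintype.card n = Fintype.card n' + Fintype.card ((Set.range f)ᶜ : Set n) := by
    rw [← Fintype.card_congr e, Fintype.card_sum]
  rw [hchar, hcard, pow_add, mul_assoc, mul_comm (X ^ _)]



/-- The adjacency matrix of the Kneser graph `K(v,k)`. -/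
def kneserAdj (v k : ℕ) :
    Matrix {S : Finset (Fin v) // S.card = k} {S : Finset (Fin v) // S.card = k} ℝ :=
  Matrix.of fun S T => if Disjoint S.1 T.1 then 1 else 0

/-- The matrix `K_{C,I} = Σ_{X',Y'} |C ⊎ Y'⟩⟨C ⊎ X'| ⊗ |I ⊎ Y'⟩⟨I ⊎ X'|`, the sum
ranging over ordered pairs of disjoint `(t-s)`-subsets `X', Y'` of `[d] \ (C ⊎ I)`. -/
noncomputable def kMat (d t s : ℕ) (C I : Finset (Fin d)) :
    Matrix (Finset (Fin d) × Finset (Fin d)) (Finset (Fin d) × Finset (Fin d)) ℝ :=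
  ∑ X' ∈ (Finset.univ \ (C ∪ I)).powersetCard (t - s),
    ∑ Y' ∈ (Finset.univ \ (C ∪ I)).powersetCard (t - s),
      if Disjoint X' Y' then
        Matrix.single (C ∪ Y', I ∪ Y') (C ∪ X', I ∪ X') (1 : ℝ)
      else 0

lemma union_cancel {α : Type*} [DecidableEq α] {C a b : Finset α}
    (ha : Disjoint C a) (hb : Disjoint C b) (h : C ∪ a = C ∪ b) : a = b := by
  rw [← Finset.union_sdiff_cancel_left ha, ← Finset.union_sdiff_cancel_left hb, h]

/-- for disjoint `s`-sets `C, I ⊆ [d]` with `s ≤ t` and `d ≥ 2t`, the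
matrix `K_{C,I}` is isospectral to the adjacency matrix of the Kneser graph
`K(d-2s, t-s)`: their multisets of nonzero eigenvalues (with multiplicity) agree,
expressed via characteristic polynomials padded by powers of `X`. -/
theorem stmt1 (d t s : ℕ) (hd : 2 * t ≤ d) (hs : s ≤ t)
    (C I : Finset (Fin d)) (hCI : Disjoint C I) (hC : C.card = s) (hI : I.card = s) :
    (kMat d t s C I).charpoly *
        Polynomial.X ^ (Fintype.card {S : Finset (Fin (d - 2 * s)) // S.card = t - s})
      = (kneserAdj (d - 2 * s) (t - s)).charpoly *
          Polynomial.X ^ (Fintype.card (Finset (Fin d) × Finset (Fin d))) := by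
  classical
  set V : Finset (Fin d) := Finset.univ \ (C ∪ I) with hV
  have hVcard : V.card = d - 2 * s := by
    rw [hV, Finset.card_sdiff_of_subset (Finset.subset_univ _), Finset.card_union_of_disjoint hCI,
      hC, hI, Finset.card_univ, Fintype.card_fin, two_mul]
  -- equivalence
  let ψ : Fin (d - 2 * s) ≃ {x // x ∈ V} := (finCongr hVcard.symm).trans V.equivFin.symm
  let ι : Fin (d - 2 * s) ↪ Fin d := ψ.toEmbedding.trans (Function.Embedding.subtype _)
  let φ : Finset (Fin (d - 2 * s)) → Finset (Fin d) := fun S => S.map ι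
  have hφV : ∀ S, φ S ⊆ V := by
    intro S x hx
    simp only [φ, Finset.mem_map] at hx
    obtain ⟨a, _, rfl⟩ := hx
    exact (ψ a).2
  have hφcard : ∀ S, (φ S).card = S.card := fun S => Finset.card_map _
  have hφinj : Function.Injective φ := Finset.map_injective ι
  have hφdisj : ∀ S T, Disjoint (φ S) (φ T) ↔ Disjoint S T := fun S T => Finset.disjoint_map ι
  have hφsurj : ∀ Y : Finset (Fin d), Y ⊆ V → ∃ S, φ S = Y := by
    intro Y hY
    refine ⟨(Y.subtype (· ∈ V)).map ψ.symm.toEmbedding, ?_⟩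
    simp only [φ]
    rw [Finset.map_map]
    have hcomp : ψ.symm.toEmbedding.trans ι = Function.Embedding.subtype (· ∈ V) := by
      ext x; simp [ι, ψ]
    rw [hcomp, Finset.subtype_map, Finset.filter_true_of_mem fun x hx => hY hx]
  have hVC : Disjoint C V := by
    rw [hV]
    exact (Finset.sdiff_disjoint.mono_right Finset.subset_union_left).symm
  have hVI : Disjoint I V := by
    rw [hV]
    exact (Finset.sdiff_disjoint.mono_right Finset.subset_union_right).symm
  -- the embedding
  let f : {S : Finset (Fin (d - 2 * s)) // S.card = t - s} →
      Finset (Fin d) × Finset (Fin d) := fun S => (C ∪ φ S.1, I ∪ φ S.1)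
  have hfinj : Function.Injective f := by
    intro S T h
    have h1 : C ∪ φ S.1 = C ∪ φ T.1 := congrArg Prod.fst h
    have := union_cancel (hVC.mono_right (hφV _)) (hVC.mono_right (hφV _)) h1
    exact Subtype.ext (hφinj this)
  have hmemP : ∀ S : {S : Finset (Fin (d - 2 * s)) // S.card = t - s},
      φ S.1 ∈ V.powersetCard (t - s) := by
    intro S
    rw [Finset.mem_powersetCard]
    exact ⟨hφV _, by rw [hφcard, S.2]⟩
  -- entry lemma: evaluate the double sum
  have hentry : ∀ p q, (kMat d t s C I) p q =
      ∑ X' ∈ V.powersetCard (t - s), ∑ Y' ∈ V.powersetCard (t - s),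
        if Disjoint X' Y' ∧ (C ∪ Y', I ∪ Y') = p ∧ (C ∪ X', I ∪ X') = q then 1 else 0 := by
    intro p q
    rw [kMat, Matrix.sum_apply]
    refine Finset.sum_congr rfl fun X' _ => ?_
    rw [Matrix.sum_apply]
    refine Finset.sum_congr rfl fun Y' _ => ?_
    rw [apply_ite (fun M : Matrix (Finset (Fin d) × Finset (Fin d))
      (Finset (Fin d) × Finset (Fin d)) ℝ => M p q), Matrix.zero_apply,
      Matrix.single, Matrix.of_apply]
    by_cases h : Disjoint X' Y' <;> simp [h, and_assoc]
  -- uniqueness helper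
  have huniq : ∀ Y' ∈ V.powersetCard (t - s), ∀ S : Finset (Fin (d - 2 * s)),
      (C ∪ Y', I ∪ Y') = (C ∪ φ S, I ∪ φ S) → Y' = φ S := by
    intro Y' hY' S h
    rw [Finset.mem_powersetCard] at hY'
    exact union_cancel (hVC.mono_right hY'.1) (hVC.mono_right (hφV _))
      (congrArg Prod.fst h)
  have h1 : ∀ i j, (kMat d t s C I) (f i) (f j) = kneserAdj (d - 2 * s) (t - s) i j := by
    intro i j
    rw [hentry]
    rw [Finset.sum_eq_single_of_mem (φ j.1) (hmemP j)]
    · rw [Finset.sum_eq_single_of_mem (φ i.1) (hmemP i)]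
      · have : ((C ∪ φ i.1, I ∪ φ i.1) : _ × _) = f i ∧
            ((C ∪ φ j.1, I ∪ φ j.1) : _ × _) = f j := ⟨rfl, rfl⟩
        simp only [this.1, this.2, and_true, kneserAdj, Matrix.of_apply]
        exact if_congr ((hφdisj _ _).trans disjoint_comm) rfl rfl
      · intro Y' hY' hne
        rw [if_neg]
        rintro ⟨-, h2, -⟩
        exact hne (huniq Y' hY' i.1 h2)
    · intro X' hX' hne
      rw [Finset.sum_eq_zero]
      intro Y' _
      rw [if_neg]
      rintro ⟨-, -, h3⟩
      exact hne (huniq X' hX' j.1 h3)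
  have h2 : ∀ p q, (p ∉ Set.range f ∨ q ∉ Set.range f) → (kMat d t s C I) p q = 0 := by
    intro p q hpq
    rw [hentry, Finset.sum_eq_zero]
    intro X' hX'
    rw [Finset.sum_eq_zero]
    intro Y' hY'
    rw [if_neg]
    rintro ⟨-, hp, hq⟩
    have hrange : ∀ Z ∈ V.powersetCard (t - s), ((C ∪ Z, I ∪ Z) : _ × _) ∈ Set.range f := by
      intro Z hZ
      rw [Finset.mem_powersetCard] at hZ
      obtain ⟨S, rfl⟩ := hφsurj Z hZ.1
      exact ⟨⟨S, by rw [← hφcard, hZ.2]⟩, rfl⟩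
    rcases hpq with h | h
    · exact h (hp ▸ hrange Y' hY')
    · exact h (hq ▸ hrange X' hX')
  exact charpoly_embed f hfinj _ _ h1 h2
end

section
/- Let d ≥ 2t. Define p₁ = C(d,t)·C(d−t,t)/C(d+t−1,t)² (the probability that two independently uniformly chosen types T₁, T₂ ∈ [0:t]^d are each collision-free and mutually disjoint) and p₂ = C(d,2t)/C(d+2t−1,2t) (the probability that a uniformly chosen type T ∈ [0:2t]^d is collision-free). Then p₁ − p₂ = Π_{i=0}^{2t−1}(1 − (2t−1)/(d+i)) · (Π_{i=0}^{t−1}(1 + t/(d+i)) − 1). In particular, for t² ≤ d, p₁ − p₂ = Ω(t²/d). -/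
open Finset Real

private lemma asc_prod (m k : ℕ) : m.ascFactorial k = ∏ i ∈ Finset.range k, (m + i) := by
  induction k with
  | zero => simp
  | succ k ih => rw [Nat.ascFactorial_succ, Finset.prod_range_succ, ih, mul_comm]

private lemma choose_cast (m k : ℕ) :
    ((m + k - 1).choose k : ℝ) * (k.factorial : ℝ) = ∏ i ∈ Finset.range k, ((m : ℝ) + i) := by
  have h := Nat.ascFactorial_eq_factorial_mul_choose' m k
  rw [asc_prod] at h
  have h2 := congrArg (Nat.cast (R := ℝ)) h
  push_cast at h2
  linarith

private lemma main_id (d t : ℕ) (h : 2 * t ≤ d) :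
    (d.choose t : ℝ) * ((d - t).choose t) / (((d + t - 1).choose t : ℝ)) ^ 2
          - (d.choose (2 * t) : ℝ) / ((d + 2 * t - 1).choose (2 * t))
        = (∏ i ∈ Finset.range (2 * t), (1 - ((2 * t : ℝ) - 1) / ((d : ℝ) + i)))
            * ((∏ i ∈ Finset.range t, (1 + (t : ℝ) / ((d : ℝ) + i))) - 1) := by
  rcases Nat.eq_zero_or_pos t with rfl | ht
  · simp
  have hd1 : 1 ≤ d := by omega
  set m : ℕ := d - 2 * t + 1 with hm
  have hmr : (m : ℝ) = (d : ℝ) - 2 * t + 1 := by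
    have h1 : m + 2 * t = d + 1 := by omega
    have h2 : (m : ℝ) + 2 * t = (d : ℝ) + 1 := by exact_mod_cast h1
    linarith
  set Nd : ℝ := ∏ i ∈ Finset.range t, ((d : ℝ) + i) with hNd
  set Ndt : ℝ := ∏ i ∈ Finset.range t, ((d : ℝ) + t + i) with hNdt
  set Nm : ℝ := ∏ i ∈ Finset.range t, ((m : ℝ) + i) with hNm
  set Nmt : ℝ := ∏ i ∈ Finset.range t, ((m : ℝ) + t + i) with hNmt
  have hNdpos : 0 < Nd := Finset.prod_pos (fun i _ => by positivity)
  have hNdtpos : 0 < Ndt := Finset.prod_pos (fun i _ => by positivity)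
  have ftpos : (0:ℝ) < (t.factorial : ℝ) := by exact_mod_cast t.factorial_pos
  have f2tpos : (0:ℝ) < ((2*t).factorial : ℝ) := by exact_mod_cast (2*t).factorial_pos
  -- choose formulas
  have hF1 : ((d + t - 1).choose t : ℝ) * (t.factorial : ℝ) = Nd := choose_cast d t
  have hF2 : (d.choose t : ℝ) * (t.factorial : ℝ) = Nmt := by
    have e : m + t + t - 1 = d := by omega
    have := choose_cast (m + t) t
    rw [e] at this
    rw [this]
    exact Finset.prod_congr rfl (fun i _ => by push_cast; ring)
  have hF3 : (((d - t).choose t : ℝ)) * (t.factorial : ℝ) = Nm := by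
    have e : m + t - 1 = d - t := by omega
    have := choose_cast m t
    rw [e] at this
    exact this
  have hsplitd : (∏ i ∈ Finset.range (2 * t), ((d : ℝ) + i)) = Nd * Ndt := by
    rw [two_mul, Finset.prod_range_add]
    congr 1
    exact Finset.prod_congr rfl (fun i _ => by push_cast; ring)
  have hsplitm : (∏ i ∈ Finset.range (2 * t), ((m : ℝ) + i)) = Nm * Nmt := by
    rw [two_mul, Finset.prod_range_add]
    congr 1
    exact Finset.prod_congr rfl (fun i _ => by push_cast; ring)
  have hF4 : ((d + 2 * t - 1).choose (2 * t) : ℝ) * ((2*t).factorial : ℝ) = Nd * Ndt := by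
    rw [← hsplitd]; exact choose_cast d (2*t)
  have hF5 : (d.choose (2 * t) : ℝ) * ((2*t).factorial : ℝ) = Nm * Nmt := by
    have e : m + 2 * t - 1 = d := by omega
    have := choose_cast m (2*t)
    rw [e] at this
    rw [this]
    exact hsplitm
  -- RHS products
  have hA : (∏ i ∈ Finset.range (2 * t), (1 - ((2 * t : ℝ) - 1) / ((d : ℝ) + i)))
      = (Nm * Nmt) / (Nd * Ndt) := by
    rw [← hsplitm, ← hsplitd, ← Finset.prod_div_distrib]
    refine Finset.prod_congr rfl (fun i _ => ?_)
    have hpos : (0:ℝ) < (d : ℝ) + i := by positivity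
    field_simp
    rw [hmr]; ring
  have hB : (∏ i ∈ Finset.range t, (1 + (t : ℝ) / ((d : ℝ) + i))) = Ndt / Nd := by
    rw [hNdt, hNd, ← Finset.prod_div_distrib]
    refine Finset.prod_congr rfl (fun i _ => ?_)
    have hpos : (0:ℝ) < (d : ℝ) + i := by positivity
    field_simp
    ring
  -- express choose casts as divisions
  have e1 : ((d + t - 1).choose t : ℝ) = Nd / (t.factorial : ℝ) := by
    field_simp; linarith [hF1]
  have e2 : (d.choose t : ℝ) = Nmt / (t.factorial : ℝ) := by
    field_simp; linarith [hF2]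
  have e3 : ((d - t).choose t : ℝ) = Nm / (t.factorial : ℝ) := by
    field_simp; linarith [hF3]
  have e4 : ((d + 2 * t - 1).choose (2 * t) : ℝ) = (Nd * Ndt) / ((2*t).factorial : ℝ) := by
    field_simp; linarith [hF4]
  have e5 : (d.choose (2 * t) : ℝ) = (Nm * Nmt) / ((2*t).factorial : ℝ) := by
    field_simp; linarith [hF5]
  rw [e1, e2, e3, e4, e5, hA, hB]
  field_simp


private lemma exp_le_one_sub (x : ℝ) (h0 : 0 ≤ x) (h1 : x ≤ 3/4) :
    Real.exp (-(2*x)) ≤ 1 - x := by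
  have hE : Real.exp (-(2*x)) * Real.exp (2*x) = 1 := by
    rw [← Real.exp_add]; norm_num
  have hEpos : (0:ℝ) < Real.exp (2*x) := Real.exp_pos _
  rcases le_or_gt x (1/2) with hc | hc
  · have h2 : 1 + 2*x ≤ Real.exp (2*x) := by
      have := Real.add_one_le_exp (2*x); linarith
    have h3 : Real.exp (-(2*x)) ≤ 1 / (1+2*x) := by
      rw [Real.exp_neg]
      rw [inv_eq_one_div]
      apply one_div_le_one_div_of_le (by linarith) h2
    refine h3.trans ?_
    rw [div_le_iff₀ (by linarith)]
    nlinarith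
  · -- 1/2 < x ≤ 3/4
    have h2 : 2*x ≤ Real.exp (2*x - 1) := by
      have := Real.add_one_le_exp (2*x - 1); linarith
    have h3 : Real.exp 1 * (2*x) ≤ Real.exp (2*x) := by
      have : Real.exp (2*x) = Real.exp 1 * Real.exp (2*x - 1) := by
        rw [← Real.exp_add]; ring_nf
      rw [this]
      exact mul_le_mul_of_nonneg_left h2 (Real.exp_pos 1).le
    have key : (3:ℝ)/8 ≤ (1-x)*(2*x) := by nlinarith [mul_nonneg (by linarith : (0:ℝ) ≤ x - 1/2) (by linarith : (0:ℝ) ≤ 3/4 - x)]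
    have he1 : (2.7182818283 : ℝ) < Real.exp 1 := Real.exp_one_gt_d9
    have h4 : (2.7182818283 : ℝ) * (3/8) ≤ Real.exp 1 * ((1-x)*(2*x)) :=
      mul_le_mul he1.le key (by norm_num) (Real.exp_pos 1).le
    have h5 : (1:ℝ) ≤ (1-x) * Real.exp (2*x) := by
      have h6 : Real.exp 1 * ((1-x)*(2*x)) = (1-x) * (Real.exp 1 * (2*x)) := by ring
      have h7 : (1-x) * (Real.exp 1 * (2*x)) ≤ (1-x) * Real.exp (2*x) :=
        mul_le_mul_of_nonneg_left h3 (by linarith)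
      nlinarith
    nlinarith

/-- the exact difference between the probability `p₁` that two
independent uniform types `T₁, T₂ ∈ [0:t]^d` are collision-free and disjoint, and
the probability `p₂` that a uniform type `T ∈ [0:2t]^d` is collision-free; and the
fact that this difference is `Ω(t²/d)` when `t² ≤ d`. -/
theorem stmt6 :
    (∀ d t : ℕ, 2 * t ≤ d →
      (d.choose t : ℝ) * ((d - t).choose t) / (((d + t - 1).choose t : ℝ)) ^ 2
          - (d.choose (2 * t) : ℝ) / ((d + 2 * t - 1).choose (2 * t))
        = (∏ i ∈ Finset.range (2 * t), (1 - ((2 * t : ℝ) - 1) / ((d : ℝ) + i)))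
            * ((∏ i ∈ Finset.range t, (1 + (t : ℝ) / ((d : ℝ) + i))) - 1)) ∧
    (∃ c : ℝ, 0 < c ∧ ∀ d t : ℕ, 1 ≤ t → t ^ 2 ≤ d → 2 * t ≤ d →
      c * (t : ℝ) ^ 2 / d
        ≤ (d.choose t : ℝ) * ((d - t).choose t) / (((d + t - 1).choose t : ℝ)) ^ 2
            - (d.choose (2 * t) : ℝ) / ((d + 2 * t - 1).choose (2 * t))) := by
  constructor
  · exact main_id
  · refine ⟨1/6000, by norm_num, fun d t ht ht2 htd => ?_⟩
    rw [main_id d t htd]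
    have hd1 : 1 ≤ d := by omega
    have hdr : (1:ℝ) ≤ (d:ℝ) := by exact_mod_cast hd1
    have htr : (1:ℝ) ≤ (t:ℝ) := by exact_mod_cast ht
    have ht2r : (t:ℝ)^2 ≤ (d:ℝ) := by exact_mod_cast ht2
    have htdr : 2*(t:ℝ) ≤ (d:ℝ) := by exact_mod_cast htd
    have h8t : (8:ℝ)*t ≤ 3*(d:ℝ) + 4 := by
      rcases Nat.lt_or_ge t 2 with h2 | h2
      · have ht1 : t = 1 := by omega
        subst ht1
        push_cast
        linarith
      · have h2r : (2:ℝ) ≤ (t:ℝ) := by exact_mod_cast h2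
        nlinarith [sq_nonneg ((t:ℝ) - 2)]
    -- lower bound on A
    set A : ℝ := ∏ i ∈ Finset.range (2 * t), (1 - ((2 * t : ℝ) - 1) / ((d : ℝ) + i)) with hA
    set B : ℝ := ∏ i ∈ Finset.range t, (1 + (t : ℝ) / ((d : ℝ) + i)) with hB
    have hAlb : Real.exp (-8) ≤ A := by
      have step1 : Real.exp (∑ i ∈ Finset.range (2*t), (-(2 * (((2 * t : ℝ) - 1) / ((d : ℝ) + i))))) ≤ A := by
        rw [Real.exp_sum]
        apply Finset.prod_le_prod (fun i _ => (Real.exp_pos _).le)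
        intro i _
        apply exp_le_one_sub
        · have : (0:ℝ) < (d:ℝ) + i := by positivity
          apply div_nonneg (by linarith) this.le
        · rw [div_le_iff₀ (by positivity)]
          have : (0:ℝ) ≤ (i:ℝ) := by positivity
          nlinarith
      refine le_trans ?_ step1
      apply Real.exp_le_exp.mpr
      have hsum : ∑ i ∈ Finset.range (2*t), (2 * (((2 * t : ℝ) - 1) / ((d : ℝ) + i))) ≤ 8 := by
        have each : ∀ i ∈ Finset.range (2*t), 2 * (((2 * t : ℝ) - 1) / ((d : ℝ) + i)) ≤ 4*(t:ℝ)/(d:ℝ) := by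
          intro i _
          have h1 : ((2 * t : ℝ) - 1) / ((d : ℝ) + i) ≤ (2*(t:ℝ)) / (d:ℝ) := by
            apply div_le_div₀ (by positivity) (by linarith) (by positivity)
            have : (0:ℝ) ≤ (i:ℝ) := by positivity
            linarith
          have h2 : (4*(t:ℝ))/(d:ℝ) = 2*((2*(t:ℝ))/(d:ℝ)) := by ring
          rw [h2]
          linarith
        calc ∑ i ∈ Finset.range (2*t), (2 * (((2 * t : ℝ) - 1) / ((d : ℝ) + i)))
            ≤ ∑ _i ∈ Finset.range (2*t), 4*(t:ℝ)/(d:ℝ) := Finset.sum_le_sum each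
          _ = (2*t:ℕ) * (4*(t:ℝ)/(d:ℝ)) := by rw [Finset.sum_const, Finset.card_range]; simp
          _ ≤ 8 := by
              push_cast
              rw [show (2*(t:ℝ))*(4*(t:ℝ)/(d:ℝ)) = 8*(t:ℝ)^2/(d:ℝ) from by ring,
                div_le_iff₀ (by positivity : (0:ℝ) < (d:ℝ))]
              nlinarith
      have hneg : ∑ i ∈ Finset.range (2*t), (-(2 * (((2 * t : ℝ) - 1) / ((d : ℝ) + i))))
          = -(∑ i ∈ Finset.range (2*t), (2 * (((2 * t : ℝ) - 1) / ((d : ℝ) + i)))) := by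
        rw [← Finset.sum_neg_distrib]
      rw [hneg]
      linarith
    have hexp8 : (1:ℝ)/3000 ≤ Real.exp (-8) := by
      rw [Real.exp_neg]
      have h1 : Real.exp (8:ℝ) = Real.exp 1 ^ 8 := by
        rw [Real.exp_one_pow]
        norm_num
      have h2 : Real.exp 1 ^ 8 < (2.7182818286:ℝ) ^ 8 :=
        pow_lt_pow_left₀ Real.exp_one_lt_d9 (Real.exp_pos 1).le (by norm_num)
      have h3 : ((2.7182818286:ℝ)) ^ 8 ≤ 3000 := by norm_num
      have h4 : Real.exp (8:ℝ) ≤ 3000 := by linarith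
      have := inv_anti₀ (Real.exp_pos 8) h4
      calc (1:ℝ)/3000 = ((3000:ℝ))⁻¹ := by norm_num
        _ ≤ (Real.exp 8)⁻¹ := this
    have hBlb : 1 + (t:ℝ)^2/(2*(d:ℝ)) ≤ B := by
      have step1 : (1 + (t:ℝ)/(2*(d:ℝ)))^t ≤ B := by
        rw [hB]
        have hc : (1 + (t:ℝ)/(2*(d:ℝ)))^t = ∏ _i ∈ Finset.range t, (1 + (t:ℝ)/(2*(d:ℝ))) := by
          rw [Finset.prod_const, Finset.card_range]
        rw [hc]
        apply Finset.prod_le_prod (fun i _ => by positivity)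
        intro i hi
        have hi' : (i:ℝ) ≤ (d:ℝ) := by
          have : i < t := Finset.mem_range.mp hi
          have : (i:ℝ) < (t:ℝ) := by exact_mod_cast this
          nlinarith
        have : (0:ℝ) < (d:ℝ) + i := by positivity
        have hdiv : (t:ℝ)/(2*(d:ℝ)) ≤ (t:ℝ)/((d:ℝ)+i) := by
          apply div_le_div_of_nonneg_left (by linarith) this (by linarith)
        linarith
      refine le_trans ?_ step1
      have := one_add_mul_le_pow (a := (t:ℝ)/(2*(d:ℝ)))
        (by have : (0:ℝ) ≤ (t:ℝ)/(2*(d:ℝ)) := by positivity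
            linarith) t
      calc (1:ℝ) + (t:ℝ)^2/(2*(d:ℝ)) = 1 + (t:ℝ) * ((t:ℝ)/(2*(d:ℝ))) := by ring
        _ ≤ (1 + (t:ℝ)/(2*(d:ℝ)))^t := this
    have hApos : (0:ℝ) < A := lt_of_lt_of_le (by positivity) (le_trans hexp8 hAlb)
    have hfinal : (1/3000 : ℝ) * ((t:ℝ)^2/(2*(d:ℝ))) ≤ A * (B - 1) := by
      apply mul_le_mul (le_trans hexp8 hAlb) (by linarith) (by positivity) hApos.le
    calc (1/6000 : ℝ) * (t:ℝ)^2 / (d:ℝ) = (1/3000 : ℝ) * ((t:ℝ)^2/(2*(d:ℝ))) := by ring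
      _ ≤ A * (B - 1) := hfinal
end

section
/- Fix n, λ with n ≥ λ, let ℓ, t ∈ ℕ, and let v = (v₁‖w₁, …, v_{t+ℓ}‖w_{t+ℓ}) be a tuple of (t+ℓ) bitstrings of length n, each split as vᵢ ∈ {0,1}^λ and wᵢ ∈ {0,1}^{n−λ}. Suppose the type of v is ℓ-fold λ-prefix collision-free. Let σ be a permutation of [t+ℓ]. Then the average over uniform k ∈ {0,1}^λ of (−1)^{⟨k, ⊕_{i=1}^{ℓ}(vᵢ ⊕ v_{σ(i)})⟩} equals 1 if σ maps the set {1,…,ℓ} onto itself, and equals 0 otherwise. -/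
open Finset

noncomputable def chi (x : ZMod 2) : ℝ := (-1) ^ x.val

lemma chi_add (x y : ZMod 2) : chi (x + y) = chi x * chi y := by
  have h0 : (0 : ZMod 2).val = 0 := rfl
  have h1 : (1 : ZMod 2).val = 1 := rfl
  have h2 : ((1 : ZMod 2) + 1).val = 0 := rfl
  obtain rfl | rfl : x = 0 ∨ x = 1 := (by revert x; decide) <;> obtain rfl | rfl : y = 0 ∨ y = 1 := (by revert y; decide) <;> simp [chi, h0, h1, h2]

lemma chi_zero : chi 0 = 1 := by simp [chi]

lemma chi_sum {ι : Type*} (s : Finset ι) (a : ι → ZMod 2) :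
    chi (∑ j ∈ s, a j) = ∏ j ∈ s, chi (a j) := by
  classical
  induction s using Finset.induction with
  | empty => simp [chi_zero]
  | insert _ _ h ih => simp [Finset.sum_insert h, Finset.prod_insert h, chi_add, ih]

lemma univ_zmod2 : (Finset.univ : Finset (ZMod 2)) = {0, 1} := by decide

lemma sum_chi_mul (z : ZMod 2) :
    (∑ k : ZMod 2, chi (k * z)) = if z = 0 then 2 else 0 := by
  have h0 : (0 : ZMod 2).val = 0 := rfl
  have h1 : (1 : ZMod 2).val = 1 := rfl
  rw [univ_zmod2]
  obtain rfl | rfl : z = 0 ∨ z = 1 := (by revert z; decide) <;> norm_num [chi, h0, h1]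

/-- for a tuple `v` of `(t+ℓ)` bitstrings of length `n` whose type
is `ℓ`-fold `λ`-prefix collision-free and a permutation `σ` of `[t+ℓ]`, the
average over uniform `k ∈ {0,1}^λ` of `(-1)^{⟨k, ⊕_{i≤ℓ}(vᵢ ⊕ v_{σ(i)})⟩}` is `1`
if `σ` maps `{1,…,ℓ}` onto itself and `0` otherwise. -/
theorem stmt7 (n lam t ℓ : ℕ) (hln : lam ≤ n)
    (v : Fin (t + ℓ) → Fin n → ZMod 2)
    (hfree : ∀ S S' : Finset (Fin (t + ℓ)), S.card = ℓ → S'.card = ℓ →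
      (∀ j : Fin lam, (∑ i ∈ S, v i (Fin.castLE hln j)) = ∑ i ∈ S', v i (Fin.castLE hln j)) →
      S = S')
    (σ : Equiv.Perm (Fin (t + ℓ))) :
    ((2 : ℝ) ^ lam)⁻¹ * ∑ k : Fin lam → ZMod 2,
        (-1 : ℝ) ^ (∑ j : Fin lam, k j *
            ∑ i ∈ Finset.univ.filter (fun i : Fin (t + ℓ) => (i : ℕ) < ℓ),
              (v i (Fin.castLE hln j) + v (σ i) (Fin.castLE hln j))).val
      = if Finset.image σ (Finset.univ.filter (fun i : Fin (t + ℓ) => (i : ℕ) < ℓ))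
            = Finset.univ.filter (fun i : Fin (t + ℓ) => (i : ℕ) < ℓ)
        then 1 else 0 := by
  classical
  set S : Finset (Fin (t + ℓ)) :=
    Finset.univ.filter (fun i : Fin (t + ℓ) => (i : ℕ) < ℓ) with hS
  set z : Fin lam → ZMod 2 := fun j =>
    ∑ i ∈ S, (v i (Fin.castLE hln j) + v (σ i) (Fin.castLE hln j)) with hz
  -- card of S
  have hcardS : S.card = ℓ := by
    have : S = (Finset.univ : Finset (Fin ℓ)).map
        ⟨Fin.castLE (Nat.le_add_left ℓ t), Fin.castLE_injective _⟩ := by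
      ext i
      simp only [hS, Finset.mem_filter, Finset.mem_univ, true_and, Finset.mem_map,
        Function.Embedding.coeFn_mk]
      constructor
      · intro h; exact ⟨⟨i, h⟩, rfl⟩
      · rintro ⟨j, -, rfl⟩; exact j.isLt
    rw [this, Finset.card_map, Finset.card_univ, Fintype.card_fin]
  -- LHS sum computation
  have key : (∑ k : Fin lam → ZMod 2,
      (-1 : ℝ) ^ (∑ j : Fin lam, k j * z j).val)
      = if (∀ j, z j = 0) then (2 : ℝ) ^ lam else 0 := by
    have step1 : ∀ k : Fin lam → ZMod 2,
        (-1 : ℝ) ^ (∑ j : Fin lam, k j * z j).val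
        = ∏ j : Fin lam, chi (k j * z j) := by
      intro k; rw [← chi_sum]; rfl
    simp only [step1]
    rw [← Fintype.prod_sum (fun j (x : ZMod 2) => chi (x * z j))]
    simp only [sum_chi_mul]
    by_cases h : ∀ j, z j = 0
    · simp [h]
    · push_neg at h
      obtain ⟨j, hj⟩ := h
      rw [if_neg (by push_neg; exact ⟨j, hj⟩)]
      exact Finset.prod_eq_zero (Finset.mem_univ j) (by simp [hj])
  -- equivalence of conditions
  have hsum : ∀ j : Fin lam, z j
      = (∑ i ∈ S, v i (Fin.castLE hln j))
        + ∑ i ∈ Finset.image (⇑σ) S, v i (Fin.castLE hln j) := by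
    intro j
    simp only [hz]
    rw [Finset.sum_add_distrib,
      Finset.sum_image (fun a _ b _ h => σ.injective h)]
  have hcond : (∀ j, z j = 0) ↔ Finset.image (⇑σ) S = S := by
    constructor
    · intro h
      refine hfree (Finset.image (⇑σ) S) S ?_ hcardS ?_
      · rw [Finset.card_image_of_injective _ σ.injective, hcardS]
      · intro j
        have hzj := h j
        rw [hsum j] at hzj
        rw [eq_neg_of_add_eq_zero_left hzj, CharTwo.neg_eq]
    · intro h j
      rw [hsum j, h, CharTwo.add_self_eq_zero]
  rw [key]
  by_cases h : ∀ j, z j = 0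
  · rw [if_pos h, if_pos (hcond.mp h)]
    field_simp
  · rw [if_neg h, if_neg (fun hc => h (hcond.mpr hc)), mul_zero]
end

section
/- Let d, t, ℓ ∈ ℕ with d = 2^n for n = ω(log λ), t = λ³, ℓ = λ/log λ. Define r₀ = 2^λ · C(d+ℓ+t−1, ℓ+t) and r₁ = C(d+ℓ−1, ℓ) · C(d+t−1, t). Then r₀/r₁ = (2^λ / C(ℓ+t, ℓ)) · Π_{i=0}^{ℓ−1}(1 + t/(d+i)) ≤ 2^λ · ((1 + t/d)/(1 + t/ℓ))^ℓ, and for sufficiently large λ this quantity is at most 2^{−λ}. -/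
open Filter

namespace Stmt10Aux
open Finset Nat

lemma asc_prod (n k : ℕ) : ∏ i ∈ Finset.range k, (n + i) = n.ascFactorial k := by
  induction k with
  | zero => simp
  | succ k ih => rw [Finset.prod_range_succ, ih, Nat.ascFactorial_succ]; ring

lemma sq_le_two_pow : ∀ L : ℕ, 4 ≤ L → L * L ≤ 2 ^ L := by
  intro L
  induction L with
  | zero => omega
  | succ L ih =>
    intro h
    rcases Nat.lt_or_ge L 4 with h4 | h4
    · have hL : L = 3 := by omega
      subst hL; norm_num
    · have h1 := ih h4
      have h2 : 2 ^ (L + 1) = 2 * 2 ^ L := by ring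
      nlinarith

lemma exp_quarter : Real.exp ((1:ℝ)/4) ≤ 2 := by
  have h := Real.exp_one_lt_d9
  have h4 : Real.exp ((1:ℝ)/4) ^ (4:ℕ) = Real.exp 1 := by
    rw [← Real.exp_nat_mul]; norm_num
  refine le_of_pow_le_pow_left₀ (n := 4) (by norm_num) (by norm_num) ?_
  rw [h4]; nlinarith [Real.exp_pos (1:ℝ)]



lemma choose_lb (ℓ t : ℕ) (hl : 1 ≤ ℓ) :
    ((1 : ℝ) + t / ℓ) ^ ℓ ≤ ((ℓ + t).choose ℓ : ℝ) := by
  have hl0 : (0:ℝ) < (ℓ:ℝ) := by exact_mod_cast hl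
  have hE : (ℓ + t).choose ℓ * ℓ ! = (t + 1).ascFactorial ℓ := by
    have h1 : (ℓ + t).choose ℓ * ℓ ! * t ! = (ℓ + t)! := by
      have := Nat.choose_mul_factorial_mul_factorial (Nat.le_add_right ℓ t)
      simpa [Nat.add_sub_cancel_left] using this
    have h2 : t ! * (t + 1).ascFactorial ℓ = (t + ℓ)! := Nat.factorial_mul_ascFactorial t ℓ
    refine Nat.eq_of_mul_eq_mul_right t.factorial_pos ?_
    rw [h1, ← Nat.add_comm t ℓ, ← h2]; ring
  have hfacne : ((ℓ ! : ℕ) : ℝ) ≠ 0 := by exact_mod_cast ℓ.factorial_ne_zero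
  have hcast : (((ℓ + t).choose ℓ : ℕ) : ℝ) = (((t + 1).ascFactorial ℓ : ℕ) : ℝ) / ((ℓ ! : ℕ) : ℝ) := by
    rw [eq_div_iff hfacne]
    exact_mod_cast congrArg (Nat.cast (R := ℝ)) hE
  have hfac : ((ℓ ! : ℕ) : ℝ) = ∏ i ∈ Finset.range ℓ, ((1:ℝ) + i) := by
    rw [← Nat.one_ascFactorial, ← asc_prod]; push_cast; rfl
  have hasc : (((t + 1).ascFactorial ℓ : ℕ) : ℝ) = ∏ i ∈ Finset.range ℓ, ((t:ℝ) + 1 + i) := by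
    rw [← asc_prod]; push_cast; rfl
  rw [hcast, hasc, hfac, ← Finset.prod_div_distrib]
  calc ((1 : ℝ) + t / ℓ) ^ ℓ = ∏ _i ∈ Finset.range ℓ, ((1 : ℝ) + t / ℓ) := by
        rw [Finset.prod_const, Finset.card_range]
    _ ≤ ∏ i ∈ Finset.range ℓ, ((t:ℝ) + 1 + i) / ((1:ℝ) + i) := by
        refine Finset.prod_le_prod (fun i _ => by positivity) (fun i hi => ?_)
        have hi' : (i:ℝ) + 1 ≤ ℓ := by
          have := Finset.mem_range.1 hi; exact_mod_cast this
        have hipos : (0:ℝ) < 1 + i := by positivity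
        rw [le_div_iff₀ hipos]
        have hdiv : (t:ℝ) / ℓ * (1 + i) ≤ t := by
          rw [div_mul_eq_mul_div, div_le_iff₀ hl0]
          have ht0 : (0:ℝ) ≤ t := by positivity
          nlinarith
        nlinarith




lemma ratio (d t ℓ : ℕ) (hd : 1 ≤ d) :
    (((d + ℓ + t - 1).choose (ℓ + t) : ℝ)) /
      (((d + ℓ - 1).choose ℓ : ℝ) * ((d + t - 1).choose t : ℝ))
    = (1 / (((ℓ + t).choose ℓ : ℝ))) * ∏ i ∈ Finset.range ℓ, (1 + (t : ℝ) / ((d : ℝ) + i)) := by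
  obtain ⟨e, rfl⟩ : ∃ e, d = e + 1 := ⟨d - 1, by omega⟩
  have a1 : e + 1 + ℓ + t - 1 = e + (ℓ + t) := by omega
  have a2 : e + 1 + ℓ - 1 = e + ℓ := by omega
  have a3 : e + 1 + t - 1 = e + t := by omega
  rw [a1, a2, a3]
  have hP : ∏ i ∈ Finset.range ℓ, (1 + (t : ℝ) / (((e+1 : ℕ) : ℝ) + i))
      = (((e+t+1).ascFactorial ℓ : ℕ) : ℝ) / (((e+1).ascFactorial ℓ : ℕ) : ℝ) := by
    rw [← asc_prod, ← asc_prod]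
    push_cast
    rw [← Finset.prod_div_distrib]
    refine Finset.prod_congr rfl fun i _ => ?_
    have h0 : (0:ℝ) < (e:ℝ) + 1 + i := by positivity
    field_simp
    ring
  have c1 : ((e + (ℓ + t)).choose (ℓ + t) : ℝ) = ((e + (ℓ + t))! : ℝ) / (((ℓ+t)! : ℝ) * (e ! : ℝ)) := by
    rw [Nat.cast_choose ℝ (Nat.le_add_left _ _), Nat.add_sub_cancel]
  have c2 : (((ℓ + t).choose ℓ) : ℝ) = ((ℓ+t)! : ℝ) / ((ℓ ! : ℝ) * (t ! : ℝ)) := by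
    rw [Nat.cast_choose ℝ (Nat.le_add_right _ _), Nat.add_sub_cancel_left]
  have c3 : (((e + ℓ).choose ℓ) : ℝ) = ((e+ℓ)! : ℝ) / ((ℓ ! : ℝ) * (e ! : ℝ)) := by
    rw [Nat.cast_choose ℝ (Nat.le_add_left _ _), Nat.add_sub_cancel]
  have c4 : (((e + t).choose t) : ℝ) = ((e+t)! : ℝ) / ((t ! : ℝ) * (e ! : ℝ)) := by
    rw [Nat.cast_choose ℝ (Nat.le_add_left _ _), Nat.add_sub_cancel]
  have cQ : (((e+1).ascFactorial ℓ : ℕ) : ℝ) = ((e+ℓ)! : ℝ) / (e ! : ℝ) := by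
    rw [eq_div_iff (by exact_mod_cast e.factorial_ne_zero)]
    rw [mul_comm]
    exact_mod_cast congrArg (Nat.cast (R := ℝ)) (Nat.factorial_mul_ascFactorial e ℓ)
  have cR : (((e+t+1).ascFactorial ℓ : ℕ) : ℝ) = ((e + (ℓ + t))! : ℝ) / ((e+t)! : ℝ) := by
    rw [eq_div_iff (by exact_mod_cast (e+t).factorial_ne_zero)]
    rw [mul_comm]
    have h := Nat.factorial_mul_ascFactorial (e+t) ℓ
    have h2 : e + t + ℓ = e + (ℓ + t) := by omega
    rw [h2] at h
    exact_mod_cast congrArg (Nat.cast (R := ℝ)) h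
  rw [hP, c1, c2, c3, c4, cQ, cR]
  have f1 : ((ℓ+t)! : ℝ) ≠ 0 := by exact_mod_cast (ℓ+t).factorial_ne_zero
  have f2 : (ℓ ! : ℝ) ≠ 0 := by exact_mod_cast ℓ.factorial_ne_zero
  have f3 : (t ! : ℝ) ≠ 0 := by exact_mod_cast t.factorial_ne_zero
  have f4 : (e ! : ℝ) ≠ 0 := by exact_mod_cast e.factorial_ne_zero
  have f5 : ((e+ℓ)! : ℝ) ≠ 0 := by exact_mod_cast (e+ℓ).factorial_ne_zero
  have f6 : ((e+t)! : ℝ) ≠ 0 := by exact_mod_cast (e+t).factorial_ne_zero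
  have f7 : ((e+(ℓ+t))! : ℝ) ≠ 0 := by exact_mod_cast (e+(ℓ+t)).factorial_ne_zero
  field_simp






lemma part1a (d t ℓ lam : ℕ) (hl : 1 ≤ ℓ) (hd : 1 ≤ d) :
    (2 : ℝ) ^ lam * ((d + ℓ + t - 1).choose (ℓ + t) : ℝ) /
        (((d + ℓ - 1).choose ℓ : ℝ) * ((d + t - 1).choose t : ℝ))
      = ((2 : ℝ) ^ lam / (((ℓ + t).choose ℓ : ℝ))) *
          ∏ i ∈ Finset.range ℓ, (1 + (t : ℝ) / ((d : ℝ) + i)) := by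
  rw [mul_div_assoc, ratio d t ℓ hd]
  ring

lemma part1b (d t ℓ lam : ℕ) (hl : 1 ≤ ℓ) (hd : 1 ≤ d) :
    ((2 : ℝ) ^ lam / (((ℓ + t).choose ℓ : ℝ))) *
          ∏ i ∈ Finset.range ℓ, (1 + (t : ℝ) / ((d : ℝ) + i))
      ≤ (2 : ℝ) ^ lam * ((1 + (t : ℝ) / d) / (1 + (t : ℝ) / ℓ)) ^ ℓ := by
  have hd0 : (0:ℝ) < (d:ℝ) := by exact_mod_cast hd
  have hl0 : (0:ℝ) < (ℓ:ℝ) := by exact_mod_cast hl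
  have hE0 : (0:ℝ) < (((ℓ + t).choose ℓ : ℕ) : ℝ) := by
    exact_mod_cast Nat.choose_pos (Nat.le_add_right ℓ t)
  have hprod : ∏ i ∈ Finset.range ℓ, (1 + (t : ℝ) / ((d : ℝ) + i)) ≤ (1 + (t:ℝ)/d) ^ ℓ := by
    calc ∏ i ∈ Finset.range ℓ, (1 + (t : ℝ) / ((d : ℝ) + i))
        ≤ ∏ _i ∈ Finset.range ℓ, (1 + (t:ℝ)/d) := by
          refine Finset.prod_le_prod (fun i _ => by positivity) (fun i _ => ?_)
          have : (0:ℝ) < (d:ℝ) + i := by positivity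
          gcongr
          all_goals first
            | exact le_add_of_nonneg_right (by positivity)
            | positivity
      _ = (1 + (t:ℝ)/d) ^ ℓ := by rw [Finset.prod_const, Finset.card_range]
  have hden : (0:ℝ) < (1 + (t:ℝ)/ℓ) ^ ℓ := by positivity
  have hlb := choose_lb ℓ t hl
  rw [div_pow, div_mul_eq_mul_div, mul_div_assoc]
  refine mul_le_mul_of_nonneg_left ?_ (by positivity)
  exact div_le_div₀ (by positivity) hprod hden hlb







lemma part2 (n : ℕ → ℕ) (hn : ∀ C : ℕ, ∀ᶠ lam : ℕ in atTop, C * Nat.log 2 lam ≤ n lam) :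
    ∀ᶠ lam : ℕ in atTop,
      (2 : ℝ) ^ lam *
          ((2 ^ n lam + lam / Nat.log 2 lam + lam ^ 3 - 1).choose
            (lam / Nat.log 2 lam + lam ^ 3) : ℝ) /
          (((2 ^ n lam + lam / Nat.log 2 lam - 1).choose (lam / Nat.log 2 lam) : ℝ) *
            ((2 ^ n lam + lam ^ 3 - 1).choose (lam ^ 3) : ℝ))
        ≤ ((2 : ℝ) ^ lam)⁻¹ := by
  filter_upwards [hn 8, eventually_ge_atTop 16] with lam h8 h16
  set L := Nat.log 2 lam with hLdef
  set ℓ := lam / L with hldef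
  set t := lam ^ 3 with htdef
  set d := 2 ^ n lam with hddef
  have hlam0 : lam ≠ 0 := by omega
  have hL4 : 4 ≤ L := by
    have h1 : Nat.log 2 16 ≤ L := Nat.log_mono_right h16
    have h2 : Nat.log 2 16 = 4 := Nat.log_eq_of_pow_le_of_lt_pow (by norm_num) (by norm_num)
    omega
  have hL0 : 0 < L := by omega
  have hpowL : 2 ^ L ≤ lam := Nat.pow_log_le_self 2 hlam0
  have hlt : lam < 2 ^ (L + 1) := Nat.lt_pow_succ_log_self (by norm_num) lam
  have hLlam : L ≤ lam := le_trans (Nat.le_of_lt (Nat.lt_two_pow_self (n := L))) hpowL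
  have hl1 : 1 ≤ ℓ := (Nat.one_le_div_iff hL0).2 hLlam
  have hd1 : 1 ≤ d := Nat.one_le_two_pow
  have hLl : L ≤ ℓ := by
    refine (Nat.le_div_iff_mul_le hL0).2 ?_
    exact le_trans (sq_le_two_pow L hL4) hpowL
  -- exponent inequality
  have hexp : 2 * lam + 1 ≤ (2 * L + 2) * ℓ := by
    have hdm : L * ℓ + lam % L = lam := Nat.div_add_mod lam L
    have hmod : lam % L < L := Nat.mod_lt _ hL0
    have h1 : (2 * L + 2) * ℓ = 2 * (L * ℓ) + 2 * ℓ := by ring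
    rw [h1]
    obtain ⟨P, hP⟩ : ∃ P, L * ℓ = P := ⟨_, rfl⟩
    rw [hP] at hdm
    omega
  -- real positivity
  have hl0R : (0:ℝ) < (ℓ:ℝ) := by exact_mod_cast hl1
  have hlamR : (0:ℝ) < (lam:ℝ) := by exact_mod_cast (by omega : 0 < lam)
  have hd0R : (0:ℝ) < (d:ℝ) := by exact_mod_cast hd1
  -- E bound: 2^lam * 2^lam * 2 ≤ (1 + t/ℓ)^ℓ
  have hML : (2:ℝ)^L ≤ (lam:ℝ) := by exact_mod_cast hpowL
  have hLR : (4:ℝ) ≤ (L:ℝ) := by exact_mod_cast hL4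
  have hbase : (2:ℝ)^(2*L+2) ≤ (lam:ℝ)^2 * L := by
    have he : (2:ℝ)^(2*L+2) = ((2:ℝ)^L)^2 * 4 := by rw [pow_add, two_mul, pow_add]; ring
    rw [he]
    nlinarith [pow_nonneg (by norm_num : (0:ℝ) ≤ 2) L]
  have htl : (lam:ℝ)^2 * L ≤ (t:ℝ)/ℓ := by
    rw [le_div_iff₀ hl0R]
    have hnatp : L * ℓ ≤ lam := by rw [mul_comm]; exact Nat.div_mul_le_self lam L
    have hLl2 : (L:ℝ) * (ℓ:ℝ) ≤ (lam:ℝ) := by exact_mod_cast hnatp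
    push_cast [htdef]
    nlinarith [sq_nonneg (lam:ℝ)]
  have hbase2 : (2:ℝ)^(2*L+2) ≤ 1 + (t:ℝ)/ℓ := by
    have ht0 : (0:ℝ) ≤ (t:ℝ)/ℓ := by positivity
    nlinarith [hbase, htl]
  have hEbound : (2:ℝ)^lam * 2^lam * 2 ≤ (1 + (t:ℝ)/ℓ)^ℓ := by
    have hpow : (2:ℝ)^((2*L+2)*ℓ) ≤ (1 + (t:ℝ)/ℓ)^ℓ := by
      rw [pow_mul]
      exact pow_le_pow_left₀ (by positivity) hbase2 ℓ
    have h2lam : (2:ℝ)^lam * 2^lam * 2 = 2^(2*lam+1) := by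
      rw [pow_add, two_mul, pow_add]; norm_num
    rw [h2lam]
    exact le_trans (pow_le_pow_right₀ one_le_two hexp) hpow
  -- (1+t/d)^ℓ ≤ 2
  have hnat : 4 * (ℓ * t) ≤ d := by
    have hM16 : 16 ≤ 2^L := by
      calc (16:ℕ) = 2^4 := by norm_num
        _ ≤ 2^L := Nat.pow_le_pow_right (by norm_num) hL4
    have hlam2M : lam ≤ 2 * 2^L := by
      have h : 2^(L+1) = 2*2^L := by ring
      omega
    calc 4 * (ℓ * t) ≤ 4 * (lam * lam^3) := by
          have hll : ℓ ≤ lam := Nat.div_le_self _ _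
          exact Nat.mul_le_mul_left _ (Nat.mul_le_mul_right _ hll)
      _ = 4 * lam^4 := by ring
      _ ≤ 4 * (2*2^L)^4 := Nat.mul_le_mul_left _ (Nat.pow_le_pow_left hlam2M 4)
      _ = 64 * ((2^L)^4) := by ring
      _ ≤ (2^L)^4 * (2^L)^4 := by
          refine Nat.mul_le_mul_right _ ?_
          calc (64:ℕ) ≤ 16^4 := by norm_num
            _ ≤ (2^L)^4 := Nat.pow_le_pow_left hM16 4
      _ = 2^(8*L) := by rw [← pow_add, ← pow_mul]; ring_nf
      _ ≤ 2^(n lam) := Nat.pow_le_pow_right (by norm_num) h8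
  have hfbound : (1 + (t:ℝ)/d)^ℓ ≤ 2 := by
    have hx : (ℓ:ℝ) * ((t:ℝ)/d) ≤ 1/4 := by
      rw [mul_div_assoc', div_le_iff₀ hd0R]
      have : ((4:ℝ) * (ℓ * t)) ≤ d := by exact_mod_cast hnat
      linarith
    calc (1 + (t:ℝ)/d)^ℓ ≤ Real.exp ((t:ℝ)/d) ^ ℓ := by
          refine pow_le_pow_left₀ (by positivity) ?_ ℓ
          linarith [Real.add_one_le_exp ((t:ℝ)/d)]
      _ = Real.exp ((ℓ:ℝ) * ((t:ℝ)/d)) := by rw [← Real.exp_nat_mul]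
      _ ≤ Real.exp (1/4) := Real.exp_le_exp.2 hx
      _ ≤ 2 := exp_quarter
  -- assemble
  rw [part1a d t ℓ lam hl1 hd1]
  refine le_trans (part1b d t ℓ lam hl1 hd1) ?_
  have hpos2 : (0:ℝ) < (2:ℝ)^lam := by positivity
  have hden : (0:ℝ) < (1 + (t:ℝ)/ℓ)^ℓ := by positivity
  rw [div_pow, mul_div_assoc', div_le_iff₀ hden, inv_mul_eq_div, le_div_iff₀ hpos2]
  calc (2:ℝ)^lam * (1 + (t:ℝ)/d)^ℓ * 2^lam ≤ (2:ℝ)^lam * 2 * 2^lam := by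
        gcongr
      _ = (2:ℝ)^lam * 2^lam * 2 := by ring
      _ ≤ (1 + (t:ℝ)/ℓ)^ℓ := hEbound


end Stmt10Aux

open Stmt10Aux in
/-- the rank-ratio computation `r₀/r₁ = (2^λ/C(ℓ+t,ℓ))·∏(1+t/(d+i))
≤ 2^λ·((1+t/d)/(1+t/ℓ))^ℓ`, and the fact that for `d = 2^n` with `n = ω(log λ)`,
`t = λ³`, `ℓ = λ/log λ`, the ratio is at most `2^{-λ}` for sufficiently large `λ`. -/
theorem stmt10 :
    (∀ d t ℓ lam : ℕ, 1 ≤ ℓ → 1 ≤ d →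
      ((2 : ℝ) ^ lam * ((d + ℓ + t - 1).choose (ℓ + t) : ℝ) /
            (((d + ℓ - 1).choose ℓ : ℝ) * ((d + t - 1).choose t : ℝ))
          = ((2 : ℝ) ^ lam / (((ℓ + t).choose ℓ : ℝ))) *
              ∏ i ∈ Finset.range ℓ, (1 + (t : ℝ) / ((d : ℝ) + i))) ∧
      (((2 : ℝ) ^ lam / (((ℓ + t).choose ℓ : ℝ))) *
            ∏ i ∈ Finset.range ℓ, (1 + (t : ℝ) / ((d : ℝ) + i))
          ≤ (2 : ℝ) ^ lam * ((1 + (t : ℝ) / d) / (1 + (t : ℝ) / ℓ)) ^ ℓ)) ∧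
    (∀ n : ℕ → ℕ, (∀ C : ℕ, ∀ᶠ lam : ℕ in atTop, C * Nat.log 2 lam ≤ n lam) →
      ∀ᶠ lam : ℕ in atTop,
        (2 : ℝ) ^ lam *
            ((2 ^ n lam + lam / Nat.log 2 lam + lam ^ 3 - 1).choose
              (lam / Nat.log 2 lam + lam ^ 3) : ℝ) /
            (((2 ^ n lam + lam / Nat.log 2 lam - 1).choose (lam / Nat.log 2 lam) : ℝ) *
              ((2 ^ n lam + lam ^ 3 - 1).choose (lam ^ 3) : ℝ))
          ≤ ((2 : ℝ) ^ lam)⁻¹) := by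
  exact ⟨fun d t ℓ lam hl hd => ⟨part1a d t ℓ lam hl hd, part1b d t ℓ lam hl hd⟩, part2⟩
end

section
/- Let ρ, σ, ξ be density matrices on the same Hilbert space. Then F(ρ,ξ) + F(σ,ξ) ≤ 1 + √F(ρ,σ), where F denotes the fidelity F(ρ,σ) = (Tr√(√ρ σ √ρ))². -/
open scoped ComplexOrder

open scoped MatrixOrder in
/-- The fidelity `F(ρ,σ) = (Tr √(√ρ σ √ρ))²` of two positive semidefinite
matrices (here `√ρ σ (√ρ)ᴴ = √ρ σ √ρ` since `√ρ` is Hermitian). -/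
noncomputable def fid {N : ℕ} (ρ σ : Matrix (Fin N) (Fin N) ℂ)
    (hρ : ρ.PosSemidef) (hσ : σ.PosSemidef) : ℝ :=
  ((CFC.sqrt (CFC.sqrt ρ * σ * Matrix.conjTranspose (CFC.sqrt ρ))).trace).re ^ 2

open scoped MatrixOrder

noncomputable def Matrix.PosSemidef.sqrt {N : ℕ} {A : Matrix (Fin N) (Fin N) ℂ}
    (_ : A.PosSemidef) : Matrix (Fin N) (Fin N) ℂ :=
  CFC.sqrt A

lemma Matrix.PosSemidef.posSemidef_sqrt {N : ℕ} {A : Matrix (Fin N) (Fin N) ℂ}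
    (hA : A.PosSemidef) : hA.sqrt.PosSemidef :=
  Matrix.nonneg_iff_posSemidef.mp (CFC.sqrt_nonneg A)

lemma Matrix.PosSemidef.sqrt_mul_self {N : ℕ} {A : Matrix (Fin N) (Fin N) ℂ}
    (hA : A.PosSemidef) : hA.sqrt * hA.sqrt = A :=
  CFC.sqrt_mul_sqrt_self A (Matrix.nonneg_iff_posSemidef.mpr hA)

open Matrix

lemma my_sqrt_congr {N : ℕ} {A B : Matrix (Fin N) (Fin N) ℂ} (h : A = B)
    (hA : A.PosSemidef) (hB : B.PosSemidef) : hA.sqrt = hB.sqrt := by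
  subst h; rfl

lemma my_polar {N : ℕ} (M : Matrix (Fin N) (Fin N) ℂ) :
    ∃ W : Matrix (Fin N) (Fin N) ℂ, Wᴴ * W = 1 ∧ W * Wᴴ = 1 ∧
      M = W * (posSemidef_conjTranspose_mul_self M).sqrt := by
  classical
  set P := (posSemidef_conjTranspose_mul_self M).sqrt with hPdef
  have hP : P.PosSemidef := (posSemidef_conjTranspose_mul_self M).posSemidef_sqrt
  have hPP : P * P = Mᴴ * M := (posSemidef_conjTranspose_mul_self M).sqrt_mul_self
  set V := EuclideanSpace ℂ (Fin N)
  set f : V →ₗ[ℂ] V := toEuclideanLin M with hf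
  set p : V →ₗ[ℂ] V := toEuclideanLin P with hp
  have hmul : ∀ (A B : Matrix (Fin N) (Fin N) ℂ) (x : V),
      toEuclideanLin (A * B) x = toEuclideanLin A (toEuclideanLin B x) := by
    intro A B x
    simp [toEuclideanLin_apply, Matrix.mulVec_mulVec]
  have hinner : ∀ x : V, (inner ℂ (f x) (f x) : ℂ) = inner ℂ (p x) (p x) := by
    intro x
    have h1 : (inner ℂ (f x) (f x) : ℂ) = inner ℂ x (toEuclideanLin (Mᴴ * M) x) := by
      rw [hmul]
      rw [Matrix.toEuclideanLin_conjTranspose_eq_adjoint]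
      rw [LinearMap.adjoint_inner_right]
    have h2 : (inner ℂ (p x) (p x) : ℂ) = inner ℂ x (toEuclideanLin (Pᴴ * P) x) := by
      rw [hmul, Matrix.toEuclideanLin_conjTranspose_eq_adjoint,
        LinearMap.adjoint_inner_right]
    rw [h1, h2, hP.isHermitian.eq, hPP]
  have hnorm : ∀ x : V, ‖f x‖ = ‖p x‖ := by
    intro x
    have := hinner x
    have h1 : (‖f x‖ : ℝ) ^ 2 = ‖p x‖ ^ 2 := by
      rw [← @inner_self_eq_norm_sq ℂ, ← @inner_self_eq_norm_sq ℂ, this]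
    exact (sq_eq_sq₀ (norm_nonneg _) (norm_nonneg _)).mp h1
  have hker : LinearMap.ker p ≤ LinearMap.ker f := by
    intro x hx
    rw [LinearMap.mem_ker] at hx ⊢
    have := hnorm x
    rw [hx, norm_zero, norm_eq_zero] at this
    exact this
  set ℓ : LinearMap.range p →ₗ[ℂ] V :=
    ((LinearMap.ker p).liftQ f hker).comp
      (p.quotKerEquivRange.symm : LinearMap.range p →ₗ[ℂ] V ⧸ LinearMap.ker p) with hℓdef
  have hℓ : ∀ (x : V) (h : p x ∈ LinearMap.range p), ℓ ⟨p x, h⟩ = f x := by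
    intro x h
    have e1 : p.quotKerEquivRange.symm ⟨p x, h⟩ = Submodule.Quotient.mk x := by
      rw [show (⟨p x, h⟩ : LinearMap.range p) = p.quotKerEquivRange (Submodule.Quotient.mk x) by
        ext; rw [p.quotKerEquivRange_apply_mk]]
      exact p.quotKerEquivRange.symm_apply_apply _
    rw [hℓdef]
    simp only [LinearMap.comp_apply, LinearEquiv.coe_coe, e1, Submodule.liftQ_apply]
  have hLnorm : ∀ s : LinearMap.range p, ‖ℓ s‖ = ‖s‖ := by
    rintro ⟨-, x, rfl⟩
    rw [hℓ x (LinearMap.mem_range_self p x)]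
    exact hnorm x
  set L : LinearMap.range p →ₗᵢ[ℂ] V := ⟨ℓ, hLnorm⟩ with hLdef
  set W' : V →ₗᵢ[ℂ] V := L.extend with hW'def
  have hW' : ∀ x : V, W' (p x) = f x := by
    intro x
    have := L.extend_apply ⟨p x, LinearMap.mem_range_self p x⟩
    rw [hW'def]
    refine this.trans ?_
    exact hℓ x _
  set W : Matrix (Fin N) (Fin N) ℂ := toEuclideanLin.symm W'.toLinearMap with hWdef
  have hWlin : toEuclideanLin W = W'.toLinearMap := toEuclideanLin.apply_symm_apply _
  have h1 : Wᴴ * W = 1 := by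
    apply toEuclideanLin.injective
    apply LinearMap.ext
    intro x
    apply ext_inner_left ℂ
    intro y
    rw [hmul, Matrix.toEuclideanLin_conjTranspose_eq_adjoint, LinearMap.adjoint_inner_right,
      hWlin]
    have : (toEuclideanLin (1 : Matrix (Fin N) (Fin N) ℂ)) x = x := by
      simp [toEuclideanLin_apply]
    rw [this]
    exact W'.inner_map_map y x
  refine ⟨W, h1, mul_eq_one_comm.mp h1, ?_⟩
  apply toEuclideanLin.injective
  apply LinearMap.ext
  intro x
  rw [hmul, hWlin]
  exact (hW' x).symm

noncomputable def myVec {N : ℕ} (A : Matrix (Fin N) (Fin N) ℂ) :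
    EuclideanSpace ℂ (Fin N × Fin N) :=
  (WithLp.equiv 2 _).symm (fun ij => A ij.1 ij.2)

lemma myVec_inner {N : ℕ} (A B : Matrix (Fin N) (Fin N) ℂ) :
    (inner ℂ (myVec A) (myVec B) : ℂ) = (Aᴴ * B).trace := by
  simp only [PiLp.inner_apply, RCLike.inner_apply, myVec, WithLp.equiv_symm_apply, PiLp.toLp_apply,
    Matrix.trace, Matrix.diag, Matrix.mul_apply, Matrix.conjTranspose_apply]
  rw [← Finset.univ_product_univ, ← Finset.sum_product']
  exact Fintype.sum_equiv (Equiv.prodComm _ _) _ _ (fun x => mul_comm _ _)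

lemma psd_trace_nonneg {N : ℕ} {P : Matrix (Fin N) (Fin N) ℂ} (hP : P.PosSemidef) :
    0 ≤ P.trace := by
  apply Finset.sum_nonneg
  intro i _
  exact hP.diag_nonneg

lemma psd_trace_re_nonneg {N : ℕ} {P : Matrix (Fin N) (Fin N) ℂ} (hP : P.PosSemidef) :
    0 ≤ P.trace.re := by
  have := psd_trace_nonneg hP
  rw [Complex.le_def] at this
  simpa using this.1

lemma psd_trace_norm {N : ℕ} {P : Matrix (Fin N) (Fin N) ℂ} (hP : P.PosSemidef) :
    ‖P.trace‖ = P.trace.re := by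
  have := psd_trace_nonneg hP
  rw [Complex.le_def] at this
  rw [show P.trace = (P.trace.re : ℂ) by
    apply Complex.ext <;> simp [this.2.symm]]
  simp [Complex.norm_real, abs_of_nonneg (by simpa using this.1)]

lemma myVec_norm_sq {N : ℕ} (A : Matrix (Fin N) (Fin N) ℂ) :
    ‖myVec A‖ ^ 2 = (Aᴴ * A).trace.re := by
  rw [← @inner_self_eq_norm_sq ℂ, myVec_inner]
  rfl

lemma trace_CS {N : ℕ} (A B : Matrix (Fin N) (Fin N) ℂ) :
    ‖(Aᴴ * B).trace‖ ≤ Real.sqrt ((Aᴴ * A).trace.re) * Real.sqrt ((Bᴴ * B).trace.re) := by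
  rw [← myVec_inner]
  calc ‖(inner ℂ (myVec A) (myVec B) : ℂ)‖ ≤ ‖myVec A‖ * ‖myVec B‖ := norm_inner_le_norm _ _
  _ = _ := by
      rw [← Real.sqrt_sq (norm_nonneg (myVec A)), ← Real.sqrt_sq (norm_nonneg (myVec B)),
        myVec_norm_sq, myVec_norm_sq]

/-- For a PSD matrix `P` and `E` with `Eᴴ * E = 1`, `‖Tr (E * P)‖ ≤ Re (Tr P)`. -/
lemma trace_isometry_mul_psd_le {N : ℕ} {P E : Matrix (Fin N) (Fin N) ℂ}
    (hP : P.PosSemidef) (hE : Eᴴ * E = 1) :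
    ‖(E * P).trace‖ ≤ P.trace.re := by
  classical
  set Q := hP.sqrt with hQdef
  have hQ : Q.PosSemidef := hP.posSemidef_sqrt
  have hQQ : Q * Q = P := hP.sqrt_mul_self
  have key : (E * P).trace = (Qᴴ * (E * Q)).trace := by
    rw [hQ.isHermitian.eq, ← hQQ, ← mul_assoc, Matrix.trace_mul_comm]
  rw [key]
  calc ‖(Qᴴ * (E * Q)).trace‖
      ≤ Real.sqrt ((Qᴴ * Q).trace.re) * Real.sqrt (((E * Q)ᴴ * (E * Q)).trace.re) :=
        trace_CS _ _
    _ = P.trace.re := by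
        have h1 : Qᴴ * Q = P := by rw [hQ.isHermitian.eq, hQQ]
        have h2 : (E * Q)ᴴ * (E * Q) = P := by
          rw [Matrix.conjTranspose_mul]
          calc Qᴴ * Eᴴ * (E * Q) = Qᴴ * (Eᴴ * E) * Q := by
                simp only [Matrix.mul_assoc]
          _ = P := by rw [hE, Matrix.mul_one, h1]
        rw [h1, h2, Real.mul_self_sqrt (psd_trace_re_nonneg hP)]

/-- The pure-state inequality: for vectors of norm at most one,
`|⟪u,w⟫|² + |⟪v,w⟫|² ≤ 1 + |⟪u,v⟫|`. -/
lemma pure_ineq {E : Type*} [NormedAddCommGroup E] [InnerProductSpace ℂ E]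
    (u v w : E) (hu : ‖u‖ ≤ 1) (hv : ‖v‖ ≤ 1) (hw : ‖w‖ ≤ 1) :
    ‖(inner ℂ u w : ℂ)‖ ^ 2 + ‖(inner ℂ v w : ℂ)‖ ^ 2 ≤ 1 + ‖(inner ℂ u v : ℂ)‖ := by
  set x : ℂ := inner ℂ u w
  set y : ℂ := inner ℂ v w
  set c : ℝ := ‖(inner ℂ u v : ℂ)‖
  have hc : 0 ≤ c := norm_nonneg _
  set s : ℝ := ‖x‖ ^ 2 + ‖y‖ ^ 2 with hs
  have hs0 : 0 ≤ s := by positivity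
  set z : E := x • u + y • v with hz
  have hzw : (inner ℂ z w : ℂ) = (s : ℝ) := by
    rw [hz, inner_add_left, inner_smul_left, inner_smul_left, hs]
    push_cast
    rw [show (inner ℂ u w : ℂ) = x from rfl, show (inner ℂ v w : ℂ) = y from rfl,
      RCLike.conj_mul, RCLike.conj_mul]
    norm_cast
  have hsz : s ≤ ‖z‖ * ‖w‖ := by
    calc s = ‖(inner ℂ z w : ℂ)‖ := by rw [hzw]; simp [abs_of_nonneg hs0]
    _ ≤ ‖z‖ * ‖w‖ := norm_inner_le_norm _ _
  have hznorm : ‖z‖ ^ 2 ≤ s * (1 + c) := by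
    rw [hz, norm_add_sq (𝕜 := ℂ), RCLike.re_to_complex]
    have h1 : ‖x • u‖ ^ 2 ≤ ‖x‖ ^ 2 := by
      rw [norm_smul]
      calc (‖x‖ * ‖u‖) ^ 2 ≤ (‖x‖ * 1) ^ 2 := by
            apply pow_le_pow_left₀ (by positivity)
            exact mul_le_mul_of_nonneg_left hu (norm_nonneg _)
      _ = ‖x‖ ^ 2 := by ring
    have h2 : ‖y • v‖ ^ 2 ≤ ‖y‖ ^ 2 := by
      rw [norm_smul]
      calc (‖y‖ * ‖v‖) ^ 2 ≤ (‖y‖ * 1) ^ 2 := by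
            apply pow_le_pow_left₀ (by positivity)
            exact mul_le_mul_of_nonneg_left hv (norm_nonneg _)
      _ = ‖y‖ ^ 2 := by ring
    have h3 : Complex.re (inner ℂ (x • u) (y • v)) ≤ ‖x‖ * ‖y‖ * c := by
      calc Complex.re (inner ℂ (x • u) (y • v) : ℂ) ≤ ‖(inner ℂ (x • u) (y • v) : ℂ)‖ :=
            Complex.re_le_norm _
      _ = ‖x‖ * ‖y‖ * c := by
          rw [inner_smul_left, inner_smul_right]
          simp [norm_mul, c]
          ring
    have h4 : 2 * (‖x‖ * ‖y‖) * c ≤ (‖x‖ ^ 2 + ‖y‖ ^ 2) * c := by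
      apply mul_le_mul_of_nonneg_right _ hc
      nlinarith [sq_nonneg (‖x‖ - ‖y‖)]
    nlinarith
  have hfin : s ^ 2 ≤ s * (1 + c) := by
    calc s ^ 2 ≤ (‖z‖ * ‖w‖) ^ 2 := by
          apply pow_le_pow_left₀ hs0 hsz
    _ ≤ ‖z‖ ^ 2 := by
          rw [mul_pow]
          calc ‖z‖ ^ 2 * ‖w‖ ^ 2 ≤ ‖z‖ ^ 2 * 1 := by
                apply mul_le_mul_of_nonneg_left _ (by positivity)
                calc ‖w‖ ^ 2 ≤ 1 ^ 2 := pow_le_pow_left₀ (norm_nonneg _) hw 2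
                _ = 1 := one_pow 2
          _ = ‖z‖ ^ 2 := mul_one _
    _ ≤ s * (1 + c) := hznorm
  rcases eq_or_lt_of_le hs0 with h | h
  · rw [hs] at h ⊢
    rw [← h]
    positivity
  · show s ≤ 1 + c
    nlinarith

lemma isom_mul {N : ℕ} {X Y : Matrix (Fin N) (Fin N) ℂ}
    (hX : Xᴴ * X = 1) (hY : Yᴴ * Y = 1) : (X * Y)ᴴ * (X * Y) = 1 := by
  rw [conjTranspose_mul]
  calc Yᴴ * Xᴴ * (X * Y) = Yᴴ * (Xᴴ * X) * Y := by simp only [Matrix.mul_assoc]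
  _ = 1 := by rw [hX, Matrix.mul_one, hY]

lemma key_abstract {N : ℕ} {ξ a c : Matrix (Fin N) (Fin N) ℂ}
    (hpa : a.PosSemidef) (hpc : c.PosSemidef) (hcc : c * c = ξ) :
    a * ξ * aᴴ = (c * a)ᴴ * (c * a) := by
  rw [conjTranspose_mul, hpa.isHermitian.eq, hpc.isHermitian.eq, ← hcc]
  simp only [Matrix.mul_assoc]

/-- Abstract core of the Nayak–Salzman inequality. -/
lemma core_ineq {N : ℕ} {a b c : Matrix (Fin N) (Fin N) ℂ}
    (hpa : a.PosSemidef) (hpb : b.PosSemidef) (hpc : c.PosSemidef)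
    (ha1 : (a * a).trace = 1) (hb1 : (b * b).trace = 1) (hc1 : (c * c).trace = 1) :
    ((posSemidef_conjTranspose_mul_self (c * a)).sqrt.trace).re ^ 2 +
      ((posSemidef_conjTranspose_mul_self (c * b)).sqrt.trace).re ^ 2 ≤
    1 + ((posSemidef_conjTranspose_mul_self (b * a)).sqrt.trace).re := by
  classical
  obtain ⟨W₁, hW₁l, hW₁r, hA⟩ := my_polar (c * a)
  obtain ⟨W₂, hW₂l, hW₂r, hB⟩ := my_polar (c * b)
  obtain ⟨W₃, hW₃l, hW₃r, hC⟩ := my_polar (b * a)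
  set P₁ := (posSemidef_conjTranspose_mul_self (c * a)).sqrt with hP₁def
  set P₂ := (posSemidef_conjTranspose_mul_self (c * b)).sqrt with hP₂def
  set P₃ := (posSemidef_conjTranspose_mul_self (b * a)).sqrt with hP₃def
  clear_value P₁ P₂ P₃
  have hP₁ : P₁.PosSemidef := hP₁def ▸ (posSemidef_conjTranspose_mul_self (c * a)).posSemidef_sqrt
  have hP₂ : P₂.PosSemidef := hP₂def ▸ (posSemidef_conjTranspose_mul_self (c * b)).posSemidef_sqrt
  have hP₃ : P₃.PosSemidef := hP₃def ▸ (posSemidef_conjTranspose_mul_self (b * a)).posSemidef_sqrt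
  set u := W₁ * a with hudef
  set v := W₂ * b with hvdef
  have norm_le_one : ∀ (X T : Matrix (Fin N) (Fin N) ℂ), Xᴴ * X = T → T.trace = 1 →
      ‖myVec X‖ ≤ 1 := by
    intro X T hXT hT
    have h := myVec_norm_sq X
    rw [hXT, hT] at h
    simp only [Complex.one_re] at h
    nlinarith [norm_nonneg (myVec X)]
  have huu : uᴴ * u = a * a := by
    rw [hudef, conjTranspose_mul]
    calc aᴴ * W₁ᴴ * (W₁ * a) = aᴴ * (W₁ᴴ * W₁) * a := by simp only [Matrix.mul_assoc]
    _ = a * a := by rw [hW₁l, Matrix.mul_one, hpa.isHermitian.eq]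
  have hvv : vᴴ * v = b * b := by
    rw [hvdef, conjTranspose_mul]
    calc bᴴ * W₂ᴴ * (W₂ * b) = bᴴ * (W₂ᴴ * W₂) * b := by simp only [Matrix.mul_assoc]
    _ = b * b := by rw [hW₂l, Matrix.mul_one, hpb.isHermitian.eq]
  have hww : cᴴ * c = c * c := by rw [hpc.isHermitian.eq]
  have hu1 : ‖myVec u‖ ≤ 1 := norm_le_one u (a * a) huu ha1
  have hv1 : ‖myVec v‖ ≤ 1 := norm_le_one v (b * b) hvv hb1
  have hw1 : ‖myVec c‖ ≤ 1 := norm_le_one c (c * c) hww hc1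
  have hiuw : (inner ℂ (myVec u) (myVec c) : ℂ) = P₁.trace := by
    rw [myVec_inner, hudef, conjTranspose_mul, hpa.isHermitian.eq,
      Matrix.mul_assoc, Matrix.trace_mul_comm, Matrix.mul_assoc, hA,
      ← Matrix.mul_assoc, hW₁l, Matrix.one_mul]
  have hivw : (inner ℂ (myVec v) (myVec c) : ℂ) = P₂.trace := by
    rw [myVec_inner, hvdef, conjTranspose_mul, hpb.isHermitian.eq,
      Matrix.mul_assoc, Matrix.trace_mul_comm, Matrix.mul_assoc, hB,
      ← Matrix.mul_assoc, hW₂l, Matrix.one_mul]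
  have hiuv : (inner ℂ (myVec u) (myVec v) : ℂ) = ((W₁ᴴ * W₂ * W₃) * P₃).trace := by
    rw [myVec_inner, hudef, hvdef, conjTranspose_mul, hpa.isHermitian.eq,
      Matrix.mul_assoc, Matrix.trace_mul_comm]
    simp only [Matrix.mul_assoc]
    rw [hC]
  have hE3 : (W₁ᴴ * W₂ * W₃)ᴴ * (W₁ᴴ * W₂ * W₃) = 1 :=
    isom_mul (isom_mul (by rw [conjTranspose_conjTranspose]; exact hW₁r) hW₂l) hW₃l
  have hbound : ‖(inner ℂ (myVec u) (myVec v) : ℂ)‖ ≤ P₃.trace.re := by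
    rw [hiuv]
    exact trace_isometry_mul_psd_le hP₃ hE3
  have main := pure_ineq (myVec u) (myVec v) (myVec c) hu1 hv1 hw1
  rw [hiuw, hivw, psd_trace_norm hP₁, psd_trace_norm hP₂] at main
  calc P₁.trace.re ^ 2 + P₂.trace.re ^ 2 ≤ 1 + ‖(inner ℂ (myVec u) (myVec v) : ℂ)‖ := main
  _ ≤ 1 + P₃.trace.re := by linarith

/-- Nayak–Salzman: for density matrices `ρ, σ, ξ`,
`F(ρ,ξ) + F(σ,ξ) ≤ 1 + √F(ρ,σ)`. -/
theorem stmt14 {N : ℕ} (ρ σ ξ : Matrix (Fin N) (Fin N) ℂ)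
    (hρ : ρ.PosSemidef) (hσ : σ.PosSemidef) (hξ : ξ.PosSemidef)
    (hρ1 : ρ.trace = 1) (hσ1 : σ.trace = 1) (hξ1 : ξ.trace = 1) :
    fid ρ ξ hρ hξ + fid σ ξ hσ hξ ≤ 1 + Real.sqrt (fid ρ σ hρ hσ) := by
  classical
  have e1 : fid ρ ξ hρ hξ =
      ((posSemidef_conjTranspose_mul_self (hξ.sqrt * hρ.sqrt)).sqrt.trace).re ^ 2 := by
    exact congrArg (fun M : Matrix (Fin N) (Fin N) ℂ => (M.trace).re ^ 2)
      (my_sqrt_congr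
        (key_abstract hρ.posSemidef_sqrt hξ.posSemidef_sqrt hξ.sqrt_mul_self)
        (hξ.mul_mul_conjTranspose_same hρ.sqrt)
        (posSemidef_conjTranspose_mul_self (hξ.sqrt * hρ.sqrt)))
  have e2 : fid σ ξ hσ hξ =
      ((posSemidef_conjTranspose_mul_self (hξ.sqrt * hσ.sqrt)).sqrt.trace).re ^ 2 := by
    exact congrArg (fun M : Matrix (Fin N) (Fin N) ℂ => (M.trace).re ^ 2)
      (my_sqrt_congr
        (key_abstract hσ.posSemidef_sqrt hξ.posSemidef_sqrt hξ.sqrt_mul_self)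
        (hξ.mul_mul_conjTranspose_same hσ.sqrt)
        (posSemidef_conjTranspose_mul_self (hξ.sqrt * hσ.sqrt)))
  have e3 : fid ρ σ hρ hσ =
      ((posSemidef_conjTranspose_mul_self (hσ.sqrt * hρ.sqrt)).sqrt.trace).re ^ 2 := by
    exact congrArg (fun M : Matrix (Fin N) (Fin N) ℂ => (M.trace).re ^ 2)
      (my_sqrt_congr
        (key_abstract hρ.posSemidef_sqrt hσ.posSemidef_sqrt hσ.sqrt_mul_self)
        (hσ.mul_mul_conjTranspose_same hρ.sqrt)
        (posSemidef_conjTranspose_mul_self (hσ.sqrt * hρ.sqrt)))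
  have ha1 : (hρ.sqrt * hρ.sqrt).trace = 1 := by rw [hρ.sqrt_mul_self, hρ1]
  have hb1 : (hσ.sqrt * hσ.sqrt).trace = 1 := by rw [hσ.sqrt_mul_self, hσ1]
  have hc1 : (hξ.sqrt * hξ.sqrt).trace = 1 := by rw [hξ.sqrt_mul_self, hξ1]
  have core := core_ineq hρ.posSemidef_sqrt hσ.posSemidef_sqrt hξ.posSemidef_sqrt ha1 hb1 hc1
  have hsq : Real.sqrt (fid ρ σ hρ hσ) =
      ((posSemidef_conjTranspose_mul_self (hσ.sqrt * hρ.sqrt)).sqrt.trace).re := by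
    rw [e3, Real.sqrt_sq (psd_trace_re_nonneg
      (posSemidef_conjTranspose_mul_self (hσ.sqrt * hρ.sqrt)).posSemidef_sqrt)]
  rw [e1, e2, hsq]
  exact core
end

section
/- Let ρ_x = E_{|ψ⟩←Haar(2^n)}[(Z^x ⊗ I^{⊗m})|ψ⟩⟨ψ|^{⊗(m+1)}(Z^x ⊗ I^{⊗m})] for x ∈ {0,1}^n, and let σ = Σ_{x∈{0,1}^n} ρ_x. Then the operator norm of σ^{−1/2} ρ_x σ^{−1/2} (on the support of σ) satisfies ‖σ^{−1/2} ρ_x σ^{−1/2}‖ ≤ ‖σ^{−1/2}‖² · ‖E_{T}|T⟩⟨T|‖ = (C(d+m, m+1)·(m+1)/d) · (1/C(d+m, m+1)) = (m+1)/d, where d = 2^n and the expectation is over uniform types T ∈ [0:m+1]^d. Consequently Tr(ρ_x σ^{−1/2} ρ_x σ^{−1/2}) ≤ (m+1)/d for every x. -/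
noncomputable section

/-- The general type state `|M⟩` of a multiset `M` of size `m+1` over the alphabet
`α = {0,1}^n`: coefficient `√(∏_a (count_M a)!)/√((m+1)!)` on each tuple whose
multiset of entries is `M`, and `0` elsewhere. -/
def genTypeState {n m : ℕ} (M : Sym (Fin n → ZMod 2) (m + 1)) :
    (Fin (m + 1) → Fin n → ZMod 2) → ℝ := fun u =>
  if Multiset.map u Finset.univ.val = (M : Multiset (Fin n → ZMod 2)) then
    Real.sqrt (∏ a ∈ (M : Multiset (Fin n → ZMod 2)).toFinset,
        Nat.factorial ((M : Multiset (Fin n → ZMod 2)).count a))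
      / Real.sqrt (Nat.factorial (m + 1)) else 0

/-- The sign picked up by `Z^x ⊗ I^{⊗m}` on the computational-basis tuple `u`
(acting on the first of the `m+1` registers). -/
def zxSign {n m : ℕ} (x : Fin n → ZMod 2) (u : Fin (m + 1) → Fin n → ZMod 2) : ℝ :=
  (-1 : ℝ) ^ (∑ j : Fin n, x j * u 0 j).val

/-- `ρ_x = (Z^x ⊗ I^{⊗m}) E_{|ψ⟩←Haar}[|ψ⟩⟨ψ|^{⊗(m+1)}] (Z^x ⊗ I^{⊗m})`, using the
identity of the Haar average with the normalized uniform mixture of type states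
over all types in `[0:m+1]^d`, `d = 2^n`. -/
def rhoX (n m : ℕ) (x : Fin n → ZMod 2) :
    Matrix (Fin (m + 1) → Fin n → ZMod 2) (Fin (m + 1) → Fin n → ZMod 2) ℝ :=
  (((2 ^ n + m).choose (m + 1) : ℝ))⁻¹ • ∑ M : Sym (Fin n → ZMod 2) (m + 1),
    Matrix.of fun u w => (zxSign x u * genTypeState M u) * (zxSign x w * genTypeState M w)

/-- `σ = Σ_{x ∈ {0,1}^n} ρ_x`. -/
def sigmaX (n m : ℕ) :
    Matrix (Fin (m + 1) → Fin n → ZMod 2) (Fin (m + 1) → Fin n → ZMod 2) ℝ :=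
  ∑ x : Fin n → ZMod 2, rhoX n m x


set_option linter.unusedSectionVars false
open Matrix

section counting
variable {α : Type*} [Fintype α] [DecidableEq α]

lemma exists_comp_perm {k : ℕ} {u w : Fin k → α}
    (h : Multiset.map u Finset.univ.val = Multiset.map w Finset.univ.val) :
    ∃ σ : Equiv.Perm (Fin k), u = w ∘ σ := by
  letI : LinearOrder α := LinearOrder.lift' (Fintype.equivFin α) (Equiv.injective _)
  have hp : List.Perm (List.ofFn u) (List.ofFn w) := by
    rw [Fin.univ_val_map, Fin.univ_val_map] at h
    exact Multiset.coe_eq_coe.mp h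
  have h1 : Monotone (u ∘ Tuple.sort u) := Tuple.monotone_sort u
  have h2 : Monotone (w ∘ Tuple.sort w) := Tuple.monotone_sort w
  have hp2 : List.Perm (List.ofFn (u ∘ Tuple.sort u)) (List.ofFn (w ∘ Tuple.sort w)) :=
    ((Tuple.sort u).ofFn_comp_perm u).trans (hp.trans ((Tuple.sort w).ofFn_comp_perm w).symm)
  have he : u ∘ Tuple.sort u = w ∘ Tuple.sort w :=
    List.ofFn_injective (List.Perm.eq_of_sortedLE h1.sortedLE_ofFn h2.sortedLE_ofFn hp2)
  refine ⟨(Tuple.sort u).symm.trans (Tuple.sort w), ?_⟩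
  funext i
  have := congrFun he ((Tuple.sort u).symm i)
  simpa [Function.comp] using this

lemma card_tuples_mul_factorials_le {k : ℕ} (M : Multiset α) :
    Fintype.card {u : Fin k → α // Multiset.map u Finset.univ.val = M} *
      ∏ a ∈ M.toFinset, (M.count a).factorial ≤ k.factorial := by
  by_cases hT : Nonempty {u : Fin k → α // Multiset.map u Finset.univ.val = M}
  · obtain ⟨⟨u₀, hu₀⟩⟩ := hT
    have hchoose : ∀ u : {u : Fin k → α // Multiset.map u Finset.univ.val = M},
        ∃ σ : Equiv.Perm (Fin k), (u : Fin k → α) = u₀ ∘ σ := fun u =>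
      exists_comp_perm (u.prop.trans hu₀.symm)
    choose s hs using hchoose
    set e := Equiv.sigmaFiberEquiv u₀ with he
    set τ : (∀ a : α, Equiv.Perm {i // u₀ i = a}) → Equiv.Perm (Fin k) := fun π =>
      (e.symm.trans (Equiv.sigmaCongrRight π)).trans e with hτ
    have hτfix : ∀ π i, u₀ (τ π i) = u₀ i := by
      intro π i
      exact (π (u₀ i) ⟨i, rfl⟩).prop
    have hτinj : Function.Injective τ := by
      intro π π' h
      funext a
      apply Equiv.ext; intro j
      have hx := DFunLike.congr_fun h (e ⟨a, j⟩)
      simp only [hτ, Equiv.trans_apply, Equiv.symm_apply_apply] at hx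
      have h4 := e.injective hx
      simpa [Equiv.sigmaCongrRight] using h4
    set F : {u : Fin k → α // Multiset.map u Finset.univ.val = M} ×
        (∀ a : α, Equiv.Perm {i // u₀ i = a}) → Equiv.Perm (Fin k) :=
      fun p => (s p.1).trans (τ p.2) with hF
    have hcomp : ∀ u π, u₀ ∘ ((s u).trans (τ π)) = (u : Fin k → α) := by
      intro u π
      funext i
      simp only [Function.comp_apply, Equiv.trans_apply, hτfix]
      exact (congrFun (hs u) i).symm
    have hFinj : Function.Injective F := by
      rintro ⟨u, π⟩ ⟨u', π'⟩ h
      simp only [hF] at h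
      have huu : u = u' := by
        apply Subtype.ext
        rw [← hcomp u π, ← hcomp u' π', h]
      subst huu
      have hττ : τ π = τ π' := by
        have := congrArg (fun g => (s u).symm.trans g) h
        simpa [← Equiv.trans_assoc, Equiv.symm_trans_self, Equiv.refl_trans] using this
      rw [hτinj hττ]
    have hcard := Fintype.card_le_of_injective F hFinj
    rw [Fintype.card_prod, Fintype.card_pi, Fintype.card_perm, Fintype.card_fin] at hcard
    have hfib : ∀ a : α, Fintype.card {i // u₀ i = a} = M.count a := by
      intro a
      rw [← hu₀, Multiset.count_map, Fintype.card_subtype, Finset.card, Finset.filter_val]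
      exact congrArg _ (Multiset.filter_congr (fun x _ => eq_comm))
    have hprod : ∏ a : α, Fintype.card (Equiv.Perm {i // u₀ i = a})
        = ∏ a ∈ M.toFinset, (M.count a).factorial := by
      rw [show (∏ a : α, Fintype.card (Equiv.Perm {i // u₀ i = a}))
          = ∏ a : α, (M.count a).factorial from
        Finset.prod_congr rfl (fun a _ => by rw [Fintype.card_perm, hfib])]
      exact (Finset.prod_subset (Finset.subset_univ M.toFinset) (fun a _ ha => by
        rw [Multiset.count_eq_zero_of_notMem (by simpa using ha), Nat.factorial_zero])).symm
    rw [← hprod]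
    exact hcard
  · rw [Fintype.card_eq_zero_iff.mpr (not_nonempty_iff.mp hT), zero_mul]
    exact Nat.zero_le _
end counting

set_option maxHeartbeats 1000000


/-- character -/
def eps {n : ℕ} (x j : Fin n → ZMod 2) : ℝ := (-1 : ℝ) ^ (∑ i : Fin n, x i * j i).val

lemma zxSign_eq {n m : ℕ} (x : Fin n → ZMod 2) (u : Fin (m + 1) → Fin n → ZMod 2) :
    zxSign x u = eps x (u 0) := rfl

lemma zmod2_pow_add (a b : ZMod 2) :
    (-1 : ℝ) ^ ((a + b).val) = (-1 : ℝ) ^ a.val * (-1 : ℝ) ^ b.val := by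
  have h : ∀ c : ZMod 2, c = 0 ∨ c = 1 := by decide
  rcases h a with ha | ha <;> rcases h b with hb | hb <;> subst ha <;> subst hb <;>
    norm_num [ZMod.val_add, ZMod.val_one, ZMod.val_zero, show ((2:ZMod 2)).val = 0 by decide]

lemma eps_mul {n : ℕ} (x j k : Fin n → ZMod 2) :
    eps x j * eps x k = eps x (j + k) := by
  unfold eps
  rw [← zmod2_pow_add]
  congr 1
  congr 1
  rw [← Finset.sum_add_distrib]
  exact Finset.sum_congr rfl fun i _ => by rw [Pi.add_apply, mul_add]

lemma eps_sq {n : ℕ} (x j : Fin n → ZMod 2) : eps x j ^ 2 = 1 := by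
  unfold eps
  rw [← pow_mul, mul_comm, pow_mul]
  norm_num

lemma char_sum {n : ℕ} (z : Fin n → ZMod 2) :
    ∑ x : Fin n → ZMod 2, eps x z = if z = 0 then (2 : ℝ) ^ n else 0 := by
  by_cases hz : z = 0
  · subst hz
    simp only [if_pos rfl]
    have h1 : ∀ x : Fin n → ZMod 2, eps x 0 = 1 := by
      intro x; unfold eps; simp
    rw [Finset.sum_congr rfl fun x _ => h1 x, Finset.sum_const, Finset.card_univ]
    simp [Fintype.card_fun]
  · rw [if_neg hz]
    obtain ⟨i, hi⟩ := Function.ne_iff.mp hz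
    have hz1 : z i = 1 := by
      have h : ∀ c : ZMod 2, c ≠ 0 → c = 1 := by decide
      exact h _ hi
    set e : Fin n → ZMod 2 := fun t => if t = i then 1 else 0 with he
    have key : ∀ x, eps (x + e) z = - eps x z := by
      intro x
      have h2 : ∑ t : Fin n, (x + e) t * z t = (∑ t : Fin n, x t * z t) + 1 := by
        have hsplit : ∀ t, (x + e) t * z t = x t * z t + e t * z t := fun t => by
          rw [Pi.add_apply, add_mul]
        rw [Finset.sum_congr rfl fun t _ => hsplit t, Finset.sum_add_distrib]
        congr 1
        have h5 : ∑ t : Fin n, e t * z t = z i := by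
          simp [he, ite_mul, Finset.sum_ite_eq']
        rw [h5, hz1]
      unfold eps
      rw [h2, zmod2_pow_add, show ((1 : ZMod 2)).val = 1 from rfl]
      ring
    have h3 : ∑ x : Fin n → ZMod 2, eps x z = ∑ x : Fin n → ZMod 2, eps (x + e) z :=
      (Fintype.sum_bijective (· + e) (Equiv.addRight e).bijective
        (fun x => eps (x + e) z) (fun x => eps x z) (fun x => rfl)).symm
    have h4 : ∑ x : Fin n → ZMod 2, eps (x + e) z = - ∑ x : Fin n → ZMod 2, eps x z := by
      rw [Finset.sum_congr rfl fun x _ => key x]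
      simp
    linarith [h3, h4]

lemma char_sum_two {n : ℕ} (j k : Fin n → ZMod 2) :
    ∑ x : Fin n → ZMod 2, eps x j * eps x k = if j = k then (2 : ℝ) ^ n else 0 := by
  rw [Finset.sum_congr rfl fun x _ => eps_mul x j k, char_sum]
  have hiff : j + k = 0 ↔ j = k := by
    constructor
    · intro h
      funext t
      have h1 := congrFun h t
      have h2 : ∀ a b : ZMod 2, a + b = 0 → a = b := by decide
      exact h2 _ _ h1
    · rintro rfl
      funext t
      have h2 : ∀ a : ZMod 2, a + a = 0 := by decide
      exact h2 _
  simp [hiff]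
def aCoef {n m : ℕ} (M : Sym (Fin n → ZMod 2) (m + 1))
    (y : (Fin (m + 1) → Fin n → ZMod 2) → ℝ) (j : Fin n → ZMod 2) : ℝ :=
  ∑ u : Fin (m + 1) → Fin n → ZMod 2, if u 0 = j then genTypeState M u * y u else 0

lemma sum_decomp {n m : ℕ} (x : Fin n → ZMod 2) (M : Sym (Fin n → ZMod 2) (m + 1))
    (y : (Fin (m + 1) → Fin n → ZMod 2) → ℝ) :
    ∑ u, zxSign x u * genTypeState M u * y u = ∑ j, eps x j * aCoef M y j := by
  unfold aCoef
  simp_rw [Finset.mul_sum, mul_ite, mul_zero]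
  rw [Finset.sum_comm]
  refine Finset.sum_congr rfl fun u _ => ?_
  rw [Finset.sum_ite_eq Finset.univ (u 0) (fun j => eps x j * (genTypeState M u * y u))]
  simp [zxSign_eq, mul_assoc]

lemma aCoef_eq_zero {n m : ℕ} (M : Sym (Fin n → ZMod 2) (m + 1))
    (y : (Fin (m + 1) → Fin n → ZMod 2) → ℝ) {j : Fin n → ZMod 2}
    (h : j ∉ (M : Multiset (Fin n → ZMod 2)).toFinset) : aCoef M y j = 0 := by
  apply Finset.sum_eq_zero
  intro u _
  split_ifs with h1
  · by_cases h2 : Multiset.map u Finset.univ.val = (M : Multiset (Fin n → ZMod 2))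
    · exfalso
      apply h
      rw [Multiset.mem_toFinset, ← h2, ← h1]
      exact Multiset.mem_map_of_mem u (Finset.mem_val.mpr (Finset.mem_univ 0))
    · have hg : genTypeState M u = 0 := by
        unfold genTypeState
        rw [if_neg h2]
      rw [hg, zero_mul]
  · rfl

lemma cs_bound {n m : ℕ} (x : Fin n → ZMod 2) (M : Sym (Fin n → ZMod 2) (m + 1))
    (y : (Fin (m + 1) → Fin n → ZMod 2) → ℝ) :
    (∑ j, eps x j * aCoef M y j) ^ 2 ≤ ((m : ℝ) + 1) * ∑ j, (aCoef M y j) ^ 2 := by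
  set s := (M : Multiset (Fin n → ZMod 2)).toFinset with hs
  have hres : ∑ j, eps x j * aCoef M y j = ∑ j ∈ s, eps x j * aCoef M y j :=
    (Finset.sum_subset (Finset.subset_univ s) (fun j _ hj => by
      rw [aCoef_eq_zero M y hj, mul_zero])).symm
  rw [hres]
  have hcs := Finset.sum_mul_sq_le_sq_mul_sq s (fun j => eps x j) (fun j => aCoef M y j)
  have heps : ∑ j ∈ s, eps x j ^ 2 = (s.card : ℝ) := by
    rw [Finset.sum_congr rfl fun j _ => eps_sq x j, Finset.sum_const, nsmul_eq_mul, mul_one]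
  have hcard : (s.card : ℝ) ≤ (m : ℝ) + 1 := by
    have h1 : s.card ≤ m + 1 := by
      calc s.card ≤ Multiset.card (M : Multiset (Fin n → ZMod 2)) :=
            Multiset.toFinset_card_le _
        _ = m + 1 := M.prop
    exact_mod_cast h1
  calc (∑ j ∈ s, eps x j * aCoef M y j) ^ 2
      ≤ (s.card : ℝ) * ∑ j ∈ s, (aCoef M y j) ^ 2 := by rw [← heps]; exact hcs
    _ ≤ ((m : ℝ) + 1) * ∑ j, (aCoef M y j) ^ 2 := by
        apply mul_le_mul hcard
        · exact Finset.sum_le_sum_of_subset_of_nonneg (Finset.subset_univ s)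
            (fun j _ _ => sq_nonneg _)
        · exact Finset.sum_nonneg fun j _ => sq_nonneg _
        · positivity

lemma char_expand {n m : ℕ} (M : Sym (Fin n → ZMod 2) (m + 1))
    (y : (Fin (m + 1) → Fin n → ZMod 2) → ℝ) :
    ∑ x : Fin n → ZMod 2, (∑ j, eps x j * aCoef M y j) ^ 2
      = (2 : ℝ) ^ n * ∑ j, (aCoef M y j) ^ 2 := by
  have step1 : ∀ x : Fin n → ZMod 2, (∑ j, eps x j * aCoef M y j) ^ 2
      = ∑ j, ∑ l, (eps x j * eps x l) * (aCoef M y j * aCoef M y l) := by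
    intro x
    rw [sq, Finset.sum_mul_sum]
    exact Finset.sum_congr rfl fun j _ => Finset.sum_congr rfl fun l _ => by ring
  rw [Finset.sum_congr rfl fun x _ => step1 x, Finset.sum_comm]
  have step2 : ∀ j, ∑ x : Fin n → ZMod 2, ∑ l, (eps x j * eps x l) * (aCoef M y j * aCoef M y l)
      = ∑ l, (∑ x : Fin n → ZMod 2, eps x j * eps x l) * (aCoef M y j * aCoef M y l) := by
    intro j
    rw [Finset.sum_comm]
    exact Finset.sum_congr rfl fun l _ => (Finset.sum_mul _ _ _).symm
  rw [Finset.sum_congr rfl fun j _ => step2 j]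
  have step3 : ∀ j, ∑ l, (∑ x : Fin n → ZMod 2, eps x j * eps x l) * (aCoef M y j * aCoef M y l)
      = (2 : ℝ) ^ n * (aCoef M y j) ^ 2 := by
    intro j
    rw [Finset.sum_congr rfl fun l _ => by
      rw [char_sum_two j l, ite_mul, zero_mul]]
    rw [Finset.sum_ite_eq Finset.univ j (fun l => (2 : ℝ) ^ n * (aCoef M y j * aCoef M y l))]
    simp [sq]
  rw [Finset.sum_congr rfl fun j _ => step3 j, ← Finset.mul_sum]

lemma dot_mulVec_eq {β : Type*} [Fintype β] (A : Matrix β β ℝ) (y : β → ℝ) :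
    y ⬝ᵥ (A *ᵥ y) = ∑ u, ∑ w, y u * (A u w * y w) := by
  simp [dotProduct, Matrix.mulVec, Finset.mul_sum]

lemma quad_rho {n m : ℕ} (x : Fin n → ZMod 2) (y : (Fin (m + 1) → Fin n → ZMod 2) → ℝ) :
    y ⬝ᵥ (rhoX n m x *ᵥ y) = (((2 ^ n + m).choose (m + 1) : ℝ))⁻¹ *
      ∑ M : Sym (Fin n → ZMod 2) (m + 1), (∑ u, zxSign x u * genTypeState M u * y u) ^ 2 := by
  rw [dot_mulVec_eq]
  have hentry : ∀ u w, rhoX n m x u w = (((2 ^ n + m).choose (m + 1) : ℝ))⁻¹ *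
      ∑ M : Sym (Fin n → ZMod 2) (m + 1),
        (zxSign x u * genTypeState M u) * (zxSign x w * genTypeState M w) := by
    intro u w
    simp [rhoX, Matrix.sum_apply]
  simp_rw [hentry]
  rw [Finset.mul_sum]
  have lhs_eq : ∀ u, ∑ w, y u * ((((2 ^ n + m).choose (m + 1) : ℝ))⁻¹ *
        (∑ M : Sym (Fin n → ZMod 2) (m + 1),
          (zxSign x u * genTypeState M u) * (zxSign x w * genTypeState M w)) * y w)
      = ∑ w, ∑ M : Sym (Fin n → ZMod 2) (m + 1), (((2 ^ n + m).choose (m + 1) : ℝ))⁻¹ *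
          ((zxSign x u * genTypeState M u * y u) * (zxSign x w * genTypeState M w * y w)) := by
    intro u
    refine Finset.sum_congr rfl fun w _ => ?_
    simp only [Finset.mul_sum, Finset.sum_mul]
    exact Finset.sum_congr rfl fun M _ => by ring
  rw [Finset.sum_congr rfl fun u _ => lhs_eq u,
    Finset.sum_congr rfl fun u (_ : u ∈ Finset.univ) => (Finset.sum_comm : _ = _),
    Finset.sum_comm]
  refine Finset.sum_congr rfl fun M _ => ?_
  rw [sq, Finset.sum_mul_sum, Finset.mul_sum]
  exact Finset.sum_congr rfl fun u _ => (Finset.mul_sum _ _ _).symm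
lemma quad_sigma {n m : ℕ} (y : (Fin (m + 1) → Fin n → ZMod 2) → ℝ) :
    y ⬝ᵥ (sigmaX n m *ᵥ y) = ∑ x : Fin n → ZMod 2, y ⬝ᵥ (rhoX n m x *ᵥ y) := by
  simp only [dot_mulVec_eq, sigmaX, Matrix.sum_apply, Finset.mul_sum, Finset.sum_mul]
  rw [Finset.sum_congr rfl fun u (_ : u ∈ Finset.univ) => (Finset.sum_comm : _ = _),
    Finset.sum_comm]

lemma key_quad {n m : ℕ} (x : Fin n → ZMod 2) (y : (Fin (m + 1) → Fin n → ZMod 2) → ℝ) :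
    (2 : ℝ) ^ n * (y ⬝ᵥ (rhoX n m x *ᵥ y)) ≤ ((m : ℝ) + 1) * (y ⬝ᵥ (sigmaX n m *ᵥ y)) := by
  rw [quad_sigma]
  simp_rw [quad_rho, sum_decomp]
  set c := (((2 ^ n + m).choose (m + 1) : ℝ))⁻¹ with hc
  have hc0 : 0 ≤ c := by positivity
  have h1 : ∑ M : Sym (Fin n → ZMod 2) (m + 1), (∑ j, eps x j * aCoef M y j) ^ 2
      ≤ ∑ M : Sym (Fin n → ZMod 2) (m + 1), (((m : ℝ) + 1) * ∑ j, (aCoef M y j) ^ 2) :=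
    Finset.sum_le_sum fun M _ => cs_bound x M y
  have h2 : ∑ x' : Fin n → ZMod 2,
        (c * ∑ M : Sym (Fin n → ZMod 2) (m + 1), (∑ j, eps x' j * aCoef M y j) ^ 2)
      = c * ∑ M : Sym (Fin n → ZMod 2) (m + 1), ((2 : ℝ) ^ n * ∑ j, (aCoef M y j) ^ 2) := by
    rw [← Finset.mul_sum, Finset.sum_comm]
    exact congrArg (c * ·) (Finset.sum_congr rfl fun M _ => char_expand M y)
  rw [h2]
  have h3 : (2 : ℝ) ^ n * (c * ∑ M : Sym (Fin n → ZMod 2) (m + 1),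
        (∑ j, eps x j * aCoef M y j) ^ 2)
      ≤ (2 : ℝ) ^ n * (c * ∑ M : Sym (Fin n → ZMod 2) (m + 1),
        (((m : ℝ) + 1) * ∑ j, (aCoef M y j) ^ 2)) :=
    mul_le_mul_of_nonneg_left (mul_le_mul_of_nonneg_left h1 hc0) (by positivity)
  refine le_trans h3 (le_of_eq ?_)
  rw [← Finset.mul_sum, ← Finset.mul_sum]
  ring

lemma transpose_of_herm {β : Type*} [Fintype β] {A : Matrix β β ℝ} (hA : A.IsHermitian) :
    Aᵀ = A := by
  ext i j
  have h1 : Aᴴ i j = A i j := by rw [hA]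
  simpa using h1

lemma dot_self_nonneg {β : Type*} [Fintype β] (v : β → ℝ) : 0 ≤ v ⬝ᵥ v :=
  Finset.sum_nonneg fun u _ => mul_self_nonneg (v u)

lemma dot_sym_mulVec {β : Type*} [Fintype β] {A : Matrix β β ℝ} (hA : Aᵀ = A)
    (y z : β → ℝ) : y ⬝ᵥ (A *ᵥ z) = (A *ᵥ y) ⬝ᵥ z := by
  rw [Matrix.dotProduct_mulVec, ← Matrix.mulVec_transpose, hA]

section withPS

variable {n m : ℕ}
  (P S : Matrix (Fin (m + 1) → Fin n → ZMod 2) (Fin (m + 1) → Fin n → ZMod 2) ℝ)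
  (hPproj : P * P = P) (hPherm : P.IsHermitian)
  (hSpsd : S.PosSemidef) (hSinv : S * sigmaX n m * S = P)

include hPproj hPherm hSpsd hSinv

lemma rayleigh_bound (x : Fin n → ZMod 2) (y : (Fin (m + 1) → Fin n → ZMod 2) → ℝ) :
    y ⬝ᵥ ((S * rhoX n m x * S) *ᵥ y) ≤ (((m : ℝ) + 1) / 2 ^ n) * (y ⬝ᵥ y) := by
  have hST : Sᵀ = S := transpose_of_herm hSpsd.1
  have hPT : Pᵀ = P := transpose_of_herm hPherm
  set z := S *ᵥ y with hz
  have e1 : y ⬝ᵥ ((S * rhoX n m x * S) *ᵥ y) = z ⬝ᵥ (rhoX n m x *ᵥ z) := by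
    rw [← Matrix.mulVec_mulVec, ← Matrix.mulVec_mulVec, dot_sym_mulVec hST, hz]
  have e2 : z ⬝ᵥ (sigmaX n m *ᵥ z) = y ⬝ᵥ (P *ᵥ y) := by
    rw [hz, ← dot_sym_mulVec hST, Matrix.mulVec_mulVec, Matrix.mulVec_mulVec, hSinv]
  have e3 : y ⬝ᵥ (P *ᵥ y) ≤ y ⬝ᵥ y := by
    have hQ : (1 - P) * (1 - P) = 1 - P := by
      rw [mul_sub, sub_mul, sub_mul, hPproj, Matrix.one_mul, Matrix.mul_one, one_mul]
      abel
    have hQT : (1 - P)ᵀ = 1 - P := by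
      rw [Matrix.transpose_sub, Matrix.transpose_one, hPT]
    have h4 : 0 ≤ y ⬝ᵥ ((1 - P) *ᵥ y) := by
      have h5 : y ⬝ᵥ ((1 - P) *ᵥ y) = ((1 - P) *ᵥ y) ⬝ᵥ ((1 - P) *ᵥ y) := by
        conv_lhs => rw [← hQ, ← Matrix.mulVec_mulVec, dot_sym_mulVec hQT]
      rw [h5]
      exact dot_self_nonneg _
    have h6 : y ⬝ᵥ ((1 - P) *ᵥ y) = y ⬝ᵥ y - y ⬝ᵥ (P *ᵥ y) := by
      rw [Matrix.sub_mulVec, dotProduct_sub, Matrix.one_mulVec]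
    rw [h6] at h4
    linarith
  have e4 : (2 : ℝ) ^ n * (z ⬝ᵥ (rhoX n m x *ᵥ z)) ≤ ((m : ℝ) + 1) * (y ⬝ᵥ (P *ᵥ y)) := by
    rw [← e2]
    exact key_quad x z
  have hpos : (0 : ℝ) < 2 ^ n := by positivity
  rw [e1, div_mul_eq_mul_div, le_div_iff₀ hpos]
  have e5 : ((m : ℝ) + 1) * (y ⬝ᵥ (P *ᵥ y)) ≤ ((m : ℝ) + 1) * (y ⬝ᵥ y) :=
    mul_le_mul_of_nonneg_left e3 (by positivity)
  calc z ⬝ᵥ (rhoX n m x *ᵥ z) * 2 ^ n = (2 : ℝ) ^ n * (z ⬝ᵥ (rhoX n m x *ᵥ z)) := by ring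
    _ ≤ ((m : ℝ) + 1) * (y ⬝ᵥ (P *ᵥ y)) := e4
    _ ≤ ((m : ℝ) + 1) * (y ⬝ᵥ y) := e5

end withPS
lemma eig_le {β : Type*} [Fintype β] [DecidableEq β] {H : Matrix β β ℝ} (hM : H.IsHermitian)
    {t : ℝ} (hray : ∀ y : β → ℝ, y ⬝ᵥ (H *ᵥ y) ≤ t * (y ⬝ᵥ y)) (i : β) :
    hM.eigenvalues i ≤ t := by
  have hmul := hM.mulVec_eigenvectorBasis i
  have hn : ‖(hM.eigenvectorBasis i : EuclideanSpace ℝ β)‖ = 1 :=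
    hM.eigenvectorBasis.orthonormal.1 i
  have hsum : (⇑(hM.eigenvectorBasis i) : β → ℝ) ⬝ᵥ ⇑(hM.eigenvectorBasis i) = 1 := by
    have h2 := congrArg (· ^ 2) hn
    rw [EuclideanSpace.norm_eq] at h2
    simp only [one_pow] at h2
    rw [Real.sq_sqrt (Finset.sum_nonneg fun u _ => sq_nonneg _)] at h2
    rw [dotProduct]
    calc ∑ u, (hM.eigenvectorBasis i) u * (hM.eigenvectorBasis i) u
        = ∑ u, ‖(hM.eigenvectorBasis i) u‖ ^ 2 :=
          Finset.sum_congr rfl fun u _ => by rw [Real.norm_eq_abs, sq_abs, sq]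
      _ = 1 := h2
  have h3 : (⇑(hM.eigenvectorBasis i) : β → ℝ) ⬝ᵥ (H *ᵥ ⇑(hM.eigenvectorBasis i))
      = hM.eigenvalues i := by
    rw [hmul, dotProduct_smul, smul_eq_mul, hsum, mul_one]
  have h4 := hray ⇑(hM.eigenvectorBasis i)
  rw [h3, hsum, mul_one] at h4
  exact h4

lemma typeState_norm_le {n m : ℕ} (M : Sym (Fin n → ZMod 2) (m + 1)) :
    ∑ u, (genTypeState M u) ^ 2 ≤ 1 := by
  have hfact : (0 : ℝ) < ((m + 1).factorial : ℝ) := by positivity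
  have hsq : ∀ u, (genTypeState M u) ^ 2 =
      if Multiset.map u Finset.univ.val = (M : Multiset (Fin n → ZMod 2)) then
        ((∏ a ∈ (M : Multiset (Fin n → ZMod 2)).toFinset,
            Nat.factorial ((M : Multiset (Fin n → ZMod 2)).count a) : ℕ) : ℝ)
          / (((m + 1).factorial : ℕ) : ℝ) else 0 := by
    intro u
    unfold genTypeState
    split_ifs with h
    · rw [div_pow, Real.sq_sqrt (by positivity), Real.sq_sqrt (by positivity)]
      push_cast
      ring
    · norm_num
  rw [Finset.sum_congr rfl fun u _ => hsq u, ← Finset.sum_filter, Finset.sum_const,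
    nsmul_eq_mul]
  have hcount : (Finset.univ.filter
        (fun u : Fin (m + 1) → Fin n → ZMod 2 =>
          Multiset.map u Finset.univ.val = (M : Multiset (Fin n → ZMod 2)))).card
      = Fintype.card {u : Fin (m + 1) → Fin n → ZMod 2 //
          Multiset.map u Finset.univ.val = (M : Multiset (Fin n → ZMod 2))} :=
    (Fintype.card_subtype _).symm
  rw [hcount, mul_div_assoc', div_le_one hfact]
  exact_mod_cast card_tuples_mul_factorials_le (k := m + 1) (M : Multiset (Fin n → ZMod 2))

lemma card_sym_eq {n m : ℕ} :
    Fintype.card (Sym (Fin n → ZMod 2) (m + 1)) = (2 ^ n + m).choose (m + 1) := by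
  rw [Sym.card_sym_eq_choose]
  congr 1
  have : Fintype.card (Fin n → ZMod 2) = 2 ^ n := by
    rw [Fintype.card_fun]
    simp [ZMod.card]
  rw [this]
  omega

lemma choose_pos' (n m : ℕ) : 0 < (2 ^ n + m).choose (m + 1) := by
  apply Nat.choose_pos
  have := Nat.one_le_two_pow (n := n)
  omega

section withPS2

variable {n m : ℕ}
  (P S : Matrix (Fin (m + 1) → Fin n → ZMod 2) (Fin (m + 1) → Fin n → ZMod 2) ℝ)
  (hPproj : P * P = P) (hPherm : P.IsHermitian)
  (hSpsd : S.PosSemidef) (hSinv : S * sigmaX n m * S = P)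

include hPproj hPherm hSpsd hSinv

lemma trace_le (x : Fin n → ZMod 2) :
    (rhoX n m x * S * rhoX n m x * S).trace ≤ ((m : ℝ) + 1) / 2 ^ n := by
  set H := S * rhoX n m x * S with hH
  have hassoc : rhoX n m x * S * rhoX n m x * S = rhoX n m x * H := by
    simp only [hH, Matrix.mul_assoc]
  rw [hassoc]
  set t := ((m : ℝ) + 1) / 2 ^ n with htdef
  have ht : 0 ≤ t := by positivity
  set c := (((2 ^ n + m).choose (m + 1) : ℝ))⁻¹ with hcdef
  have hc0 : (0 : ℝ) ≤ c := by positivity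
  have h1 : (rhoX n m x * H).trace = c * ∑ M : Sym (Fin n → ZMod 2) (m + 1),
      (fun u => zxSign x u * genTypeState M u) ⬝ᵥ
        (H *ᵥ (fun u => zxSign x u * genTypeState M u)) := by
    unfold rhoX
    rw [Matrix.smul_mul, Matrix.sum_mul, Matrix.trace_smul, Matrix.trace_sum, smul_eq_mul]
    congr 1
    refine Finset.sum_congr rfl fun M _ => ?_
    simp only [Matrix.trace, Matrix.diag, Matrix.mul_apply, Matrix.of_apply,
      dotProduct, Matrix.mulVec, Finset.mul_sum]
    rw [Finset.sum_comm]
    exact Finset.sum_congr rfl fun w _ => Finset.sum_congr rfl fun u _ => by ring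
  rw [h1]
  have h2 : ∀ M : Sym (Fin n → ZMod 2) (m + 1),
      (fun u => zxSign x u * genTypeState M u) ⬝ᵥ
        (H *ᵥ (fun u => zxSign x u * genTypeState M u)) ≤ t := by
    intro M
    have hray := rayleigh_bound P S hPproj hPherm hSpsd hSinv x
      (fun u => zxSign x u * genTypeState M u)
    have hff : (fun u => zxSign x u * genTypeState M u) ⬝ᵥ
        (fun u => zxSign x u * genTypeState M u) ≤ 1 := by
      rw [dotProduct]
      calc ∑ u, (zxSign x u * genTypeState M u) * (zxSign x u * genTypeState M u)
          = ∑ u, (genTypeState M u) ^ 2 := by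
            refine Finset.sum_congr rfl fun u _ => ?_
            have hzx : zxSign x u * zxSign x u = 1 := by
              unfold zxSign
              rw [← pow_add]
              exact Even.neg_one_pow ⟨_, rfl⟩
            calc (zxSign x u * genTypeState M u) * (zxSign x u * genTypeState M u)
                = (zxSign x u * zxSign x u) * (genTypeState M u) ^ 2 := by ring
              _ = (genTypeState M u) ^ 2 := by rw [hzx, one_mul]
        _ ≤ 1 := typeState_norm_le M
    calc (fun u => zxSign x u * genTypeState M u) ⬝ᵥ
          (H *ᵥ (fun u => zxSign x u * genTypeState M u))
        ≤ t * ((fun u => zxSign x u * genTypeState M u) ⬝ᵥ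
            (fun u => zxSign x u * genTypeState M u)) := hray
      _ ≤ t * 1 := mul_le_mul_of_nonneg_left hff ht
      _ = t := mul_one t
  have hNpos : (0 : ℝ) < (((2 ^ n + m).choose (m + 1) : ℕ) : ℝ) := by
    exact_mod_cast choose_pos' n m
  calc c * ∑ M : Sym (Fin n → ZMod 2) (m + 1),
        (fun u => zxSign x u * genTypeState M u) ⬝ᵥ
          (H *ᵥ (fun u => zxSign x u * genTypeState M u))
      ≤ c * ∑ _M : Sym (Fin n → ZMod 2) (m + 1), t :=
        mul_le_mul_of_nonneg_left (Finset.sum_le_sum fun M _ => h2 M) hc0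
    _ = c * ((((2 ^ n + m).choose (m + 1) : ℕ) : ℝ) * t) := by
        rw [Finset.sum_const, nsmul_eq_mul, Finset.card_univ, card_sym_eq]
    _ = t := by
        rw [hcdef, ← mul_assoc, inv_mul_cancel₀ (ne_of_gt hNpos), one_mul]

end withPS2


/-- with `P` the orthogonal projection onto the support of `σ` and
`S = σ^{-1/2}` (the positive square root of the pseudo-inverse of `σ`,
characterized by `S ⪰ 0`, `SσS = P`, `SP = S`), every eigenvalue of the positive
semidefinite matrix `σ^{-1/2} ρ_x σ^{-1/2}` is at most `(m+1)/2^n`; consequently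
`Tr(ρ_x σ^{-1/2} ρ_x σ^{-1/2}) ≤ (m+1)/2^n` for every `x`. -/
theorem stmt19 (n m : ℕ)
    (P S : Matrix (Fin (m + 1) → Fin n → ZMod 2) (Fin (m + 1) → Fin n → ZMod 2) ℝ)
    (hPproj : P * P = P) (hPherm : P.IsHermitian)
    (hPsupp : P * sigmaX n m = sigmaX n m) (hPrank : P.rank = (sigmaX n m).rank)
    (hSpsd : S.PosSemidef) (hSinv : S * sigmaX n m * S = P) (hSP : S * P = S) :
    ∀ x : Fin n → ZMod 2,
      (∀ hM : (S * rhoX n m x * S).IsHermitian,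
        ∀ i, hM.eigenvalues i ≤ ((m : ℝ) + 1) / 2 ^ n) ∧
      (rhoX n m x * S * rhoX n m x * S).trace ≤ ((m : ℝ) + 1) / 2 ^ n := by
  intro x
  constructor
  · intro hM i
    exact eig_le hM (fun y => rayleigh_bound P S hPproj hPherm hSpsd hSinv x y) i
  · exact trace_le P S hPproj hPherm hSpsd hSinv x

end
end
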